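/- arXiv:2310.13964 — 7 statements merged into one kernel-verified Lean document; each statement's English description precedes it below -/
import Mathlib

section
/- Let F be the matrix function built from the data (r₀, τ₁, τ₂) and let F̃ be the matrix function built in the same way from the data (conj(r₀), −conj(τ₁), conj(τ₂)) (i.e., with σ̃₀ = conj(σ₀) and σ̃₁ = −conj(σ₁)). Then a complex number λ is an eigenvalue of the problem 𝓛₁ for F (i.e., there is a nonzero C¹ solution y of y' = (F+Λ(λ))y on [0,1] with y₁(0) = 0, y₁(1) = y₂(1) = y₃(1) = 0) if and only if conj(λ) is an eigenvalue of the problem 𝓛₃ for F̃ (i.e., there is a nonzero C¹ solution z of z' = (F̃+Λ(conj λ))z on [0,1] with z₁(0) = z₂(0) = z₃(0) = 0, z₁(1) = 0). -/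
open MeasureTheory Set

/-- The associated matrix `F(x)` built from the data `(r₀, τ₁, τ₂)`, where
`σ₁(x) = ∫₀ˣ τ₁` and `σ₀(x) = ∫₀ˣ r₀ − x∫₀¹ r₀`. -/
noncomputable def assocF (r₀ τ₁ τ₂ : ℝ → ℂ) (x : ℝ) : Matrix (Fin 4) (Fin 4) ℂ :=
  let σ₁ : ℂ := ∫ t in (0:ℝ)..x, τ₁ t
  let σ₀ : ℂ := (∫ t in (0:ℝ)..x, r₀ t) - x * ∫ t in (0:ℝ)..(1:ℝ), r₀ t
  !![0, 1, 0, 0;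
     -(σ₁ + σ₀), 0, 1, 0;
     0, -τ₂ x + 2 * σ₀, 0, 1;
     σ₀ ^ 2 - σ₁ ^ 2, 0, σ₁ - σ₀, 0]

/-- The matrix `Λ(λ)` whose only nonzero entry is `λ` in position `(4,1)`. -/
noncomputable def lamMat (l : ℂ) : Matrix (Fin 4) (Fin 4) ℂ :=
  Matrix.of fun i j => if i = 3 ∧ j = 0 then l else 0

/-- `λ` is an eigenvalue of the problem `𝓛₁` for the data `(r₀, τ₁, τ₂)`. -/
noncomputable def IsEigenL1 (r₀ τ₁ τ₂ : ℝ → ℂ) (l : ℂ) : Prop :=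
  ∃ y : ℝ → Fin 4 → ℂ,
    (∀ x ∈ Set.Icc (0:ℝ) 1, HasDerivWithinAt y
      ((assocF r₀ τ₁ τ₂ x + lamMat l).mulVec (y x)) (Set.Icc (0:ℝ) 1) x) ∧
    (∃ x ∈ Set.Icc (0:ℝ) 1, y x ≠ 0) ∧
    y (0:ℝ) 0 = 0 ∧ y (1:ℝ) 0 = 0 ∧ y (1:ℝ) 1 = 0 ∧ y (1:ℝ) 2 = 0

/-- `λ` is an eigenvalue of the problem `𝓛₃` for the data `(r₀, τ₁, τ₂)`. -/
noncomputable def IsEigenL3 (r₀ τ₁ τ₂ : ℝ → ℂ) (l : ℂ) : Prop :=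
  ∃ y : ℝ → Fin 4 → ℂ,
    (∀ x ∈ Set.Icc (0:ℝ) 1, HasDerivWithinAt y
      ((assocF r₀ τ₁ τ₂ x + lamMat l).mulVec (y x)) (Set.Icc (0:ℝ) 1) x) ∧
    (∃ x ∈ Set.Icc (0:ℝ) 1, y x ≠ 0) ∧
    y (0:ℝ) 0 = 0 ∧ y (0:ℝ) 1 = 0 ∧ y (0:ℝ) 2 = 0 ∧ y (1:ℝ) 0 = 0

open Matrix

namespace EigenAux

/-- `σ₁`. -/
noncomputable def s1F (τ₁ : ℝ → ℂ) (x : ℝ) : ℂ := ∫ t in (0:ℝ)..x, τ₁ t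

/-- `σ₀`. -/
noncomputable def s0F (r₀ : ℝ → ℂ) (x : ℝ) : ℂ :=
  (∫ t in (0:ℝ)..x, r₀ t) - x * ∫ t in (0:ℝ)..(1:ℝ), r₀ t

lemma assocF_eq (r₀ τ₁ τ₂ : ℝ → ℂ) (x : ℝ) :
    assocF r₀ τ₁ τ₂ x =
      !![0, 1, 0, 0;
         -(s1F τ₁ x + s0F r₀ x), 0, 1, 0;
         0, -τ₂ x + 2 * s0F r₀ x, 0, 1;
         s0F r₀ x ^ 2 - s1F τ₁ x ^ 2, 0, s1F τ₁ x - s0F r₀ x, 0] := rfl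

lemma mulVec_expand (r₀ τ₁ τ₂ : ℝ → ℂ) (l : ℂ) (x : ℝ) (v : Fin 4 → ℂ) :
    (assocF r₀ τ₁ τ₂ x + lamMat l) *ᵥ v =
      ![v 1,
        -(s1F τ₁ x + s0F r₀ x) * v 0 + v 2,
        (-τ₂ x + 2 * s0F r₀ x) * v 1 + v 3,
        (s0F r₀ x ^ 2 - s1F τ₁ x ^ 2 + l) * v 0 + (s1F τ₁ x - s0F r₀ x) * v 2] := by
  funext i
  fin_cases i <;>
    simp [assocF_eq, lamMat, Matrix.mulVec, dotProduct, Fin.sum_univ_four,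
      Matrix.add_apply, Matrix.cons_val_zero, Matrix.cons_val_one, Matrix.head_cons]

lemma intervalIntegral_conj (f : ℝ → ℂ) (a b : ℝ) :
    ∫ t in a..b, (starRingEnd ℂ) (f t) = (starRingEnd ℂ) (∫ t in a..b, f t) := by
  unfold intervalIntegral
  rw [integral_conj, integral_conj, map_sub]

lemma s1F_adj (τ₁ : ℝ → ℂ) (x : ℝ) :
    s1F (fun t => -(starRingEnd ℂ) (τ₁ t)) x = -(starRingEnd ℂ) (s1F τ₁ x) := by
  simp [s1F, intervalIntegral.integral_neg, intervalIntegral_conj]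

lemma s0F_adj (r₀ : ℝ → ℂ) (x : ℝ) :
    s0F (fun t => (starRingEnd ℂ) (r₀ t)) x = (starRingEnd ℂ) (s0F r₀ x) := by
  simp [s0F, intervalIntegral_conj, map_sub, _root_.map_mul, Complex.conj_ofReal]

end EigenAux

namespace EigenAux

/-- Sum of entry norms, dominating the operator norm of `mulVec`. -/
noncomputable def entSum (A : Matrix (Fin 4) (Fin 4) ℂ) : ℝ := ∑ i, ∑ j, ‖A i j‖

lemma entSum_nonneg (A : Matrix (Fin 4) (Fin 4) ℂ) : 0 ≤ entSum A :=
  Finset.sum_nonneg fun _ _ => Finset.sum_nonneg fun _ _ => norm_nonneg _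

lemma norm_mulVec_le (A : Matrix (Fin 4) (Fin 4) ℂ) (v : Fin 4 → ℂ) :
    ‖A *ᵥ v‖ ≤ entSum A * ‖v‖ := by
  rw [pi_norm_le_iff_of_nonneg (mul_nonneg (entSum_nonneg A) (norm_nonneg v))]
  intro i
  calc ‖(A *ᵥ v) i‖ = ‖∑ j, A i j * v j‖ := rfl
    _ ≤ ∑ j, ‖A i j * v j‖ := norm_sum_le _ _
    _ ≤ ∑ j, ‖A i j‖ * ‖v‖ := by
        refine Finset.sum_le_sum fun j _ => ?_
        rw [norm_mul]
        exact mul_le_mul_of_nonneg_left (norm_le_pi_norm v j) (norm_nonneg _)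
    _ = (∑ j, ‖A i j‖) * ‖v‖ := by rw [Finset.sum_mul]
    _ ≤ entSum A * ‖v‖ := by
        refine mul_le_mul_of_nonneg_right ?_ (norm_nonneg _)
        exact Finset.single_le_sum (f := fun i => ∑ j, ‖A i j‖)
          (fun _ _ => Finset.sum_nonneg fun _ _ => norm_nonneg _) (Finset.mem_univ i)

lemma lipschitz_mulVec (A : Matrix (Fin 4) (Fin 4) ℂ) (K : ℝ) (h : entSum A ≤ K) :
    LipschitzWith K.toNNReal (fun v : Fin 4 → ℂ => A *ᵥ v) := by
  refine LipschitzWith.of_dist_le_mul fun x y => ?_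
  rw [dist_eq_norm, dist_eq_norm, ← Matrix.mulVec_sub]
  calc ‖A *ᵥ (x - y)‖ ≤ entSum A * ‖x - y‖ := norm_mulVec_le A _
    _ ≤ (K.toNNReal : ℝ) * ‖x - y‖ :=
        mul_le_mul_of_nonneg_right (h.trans (Real.le_coe_toNNReal K)) (norm_nonneg _)

lemma cont_mulVec (B : ℝ → Matrix (Fin 4) (Fin 4) ℂ)
    (hB : ∀ i j, Continuous fun t => B t i j) (v : Fin 4 → ℂ) :
    Continuous fun t => B t *ᵥ v := by
  refine continuous_pi fun i => ?_
  simp only [Matrix.mulVec, dotProduct]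
  exact continuous_finset_sum _ fun j _ => (hB i j).mul continuous_const

lemma hasDerivWithinAt_singleton' (f : ℝ → Fin 4 → ℂ) (v : Fin 4 → ℂ) (x : ℝ) :
    HasDerivWithinAt f v {x} x := by
  rw [hasDerivWithinAt_iff_isLittleO, nhdsWithin_singleton]
  simp [Asymptotics.isLittleO_pure]

/-- Local existence for a linear ODE, from Picard–Lindelöf. -/
lemma ode_local (B : ℝ → Matrix (Fin 4) (Fin 4) ℂ)
    (hB : ∀ i j, Continuous fun t => B t i j) (K : ℝ)
    (hK : ∀ t, entSum (B t) ≤ K) (s e : ℝ) (hse : s ≤ e)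
    (hsmall : (2 * K + 1) * (e - s) ≤ 1) (ξ : Fin 4 → ℂ) :
    ∃ z : ℝ → Fin 4 → ℂ, z s = ξ ∧
      ∀ t ∈ Icc s e, HasDerivWithinAt z (B t *ᵥ z t) (Icc s e) t := by
  have hK0 : 0 ≤ K := le_trans (entSum_nonneg _) (hK 0)
  have hpl : IsPicardLindelof (fun t v => B t *ᵥ v) (tmin := s) (tmax := e) ⟨s, le_rfl, hse⟩
      ξ (‖ξ‖₊ + 1) 0 (K * (2 * ‖ξ‖ + 1)).toNNReal K.toNNReal := by
    constructor
    · exact fun t _ => (lipschitz_mulVec (B t) K (hK t)).lipschitzOnWith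
    · exact fun v _ => (cont_mulVec B hB v).continuousOn
    · intro t _ x hx
      have hxn : ‖x‖ ≤ 2 * ‖ξ‖ + 1 := by
        have h1 : ‖x‖ - ‖ξ‖ ≤ ‖x - ξ‖ := norm_sub_norm_le x ξ
        have h2 : dist x ξ ≤ ‖ξ‖ + 1 := by simpa using Metric.mem_closedBall.1 hx
        rw [dist_eq_norm] at h2
        linarith
      calc ‖B t *ᵥ x‖ ≤ entSum (B t) * ‖x‖ := norm_mulVec_le _ _
        _ ≤ K * (2 * ‖ξ‖ + 1) :=
            mul_le_mul (hK t) hxn (norm_nonneg _) hK0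
        _ ≤ _ := Real.le_coe_toNNReal _
    · show ((K * (2 * ‖ξ‖ + 1)).toNNReal : ℝ) * max (e - s) (s - s)
        ≤ ((‖ξ‖₊ + 1 : NNReal) : ℝ) - ((0 : NNReal) : ℝ)
      rw [Real.coe_toNNReal _ (by positivity)]
      push_cast
      have hmax : max (e - s) (s - s) = e - s := by
        rw [sub_self]; exact max_eq_left (by linarith)
      rw [hmax]
      nlinarith [norm_nonneg ξ, sub_nonneg.2 hse,
        mul_le_mul_of_nonneg_left hsmall (show (0:ℝ) ≤ ‖ξ‖ + 1/2 by positivity)]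
  obtain ⟨f, hf0, hf⟩ := IsPicardLindelof.exists_eq_forall_mem_Icc_hasDerivWithinAt₀ hpl
  exact ⟨f, hf0, hf⟩

end EigenAux

namespace EigenAux

lemma glue_ode (B : ℝ → Matrix (Fin 4) (Fin 4) ℂ) (a c d : ℝ) (hac : a ≤ c) (hcd : c ≤ d)
    (y z : ℝ → Fin 4 → ℂ) (hyz : y c = z c)
    (hy : ∀ t ∈ Icc a c, HasDerivWithinAt y (B t *ᵥ y t) (Icc a c) t)
    (hz : ∀ t ∈ Icc c d, HasDerivWithinAt z (B t *ᵥ z t) (Icc c d) t) :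
    ∃ w : ℝ → Fin 4 → ℂ, (∀ t ∈ Icc a c, w t = y t) ∧
      ∀ t ∈ Icc a d, HasDerivWithinAt w (B t *ᵥ w t) (Icc a d) t := by
  classical
  set w : ℝ → Fin 4 → ℂ := fun t => if t ≤ c then y t else z t with hw
  have hwy : ∀ u ∈ Icc a c, w u = y u := fun u hu => if_pos hu.2
  have hwz : ∀ u ∈ Icc c d, w u = z u := by
    intro u hu
    by_cases h : u ≤ c
    · have : u = c := le_antisymm h hu.1
      subst this
      simp only [hw, if_pos le_rfl, hyz]
    · exact if_neg h
  refine ⟨w, hwy, ?_⟩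
  intro t ht
  rcases lt_trichotomy t c with htc | htc | htc
  · have ht' : t ∈ Icc a c := ⟨ht.1, htc.le⟩
    have hset : Icc a c =ᶠ[nhds t] Icc a d := by
      rw [Filter.eventuallyEq_set]
      filter_upwards [Iio_mem_nhds htc] with u (hu : u < c)
      simp only [mem_Icc]
      constructor
      · rintro ⟨h1, _⟩; exact ⟨h1, le_trans hu.le hcd⟩
      · rintro ⟨h1, _⟩; exact ⟨h1, hu.le⟩
    have h2 := (hy t ht').congr_set hset
    have hwt : w t = y t := if_pos htc.le
    have h3 := h2.congr_of_eventuallyEq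
      (by filter_upwards [mem_nhdsWithin_of_mem_nhds (Iio_mem_nhds htc)] with u (hu : u < c)
          exact if_pos hu.le) hwt
    rw [show B t *ᵥ w t = B t *ᵥ y t by rw [hwt]]
    exact h3
  · subst htc
    have h1 : HasDerivWithinAt w (B t *ᵥ y t) (Icc a t) t :=
      (hy t ⟨hac, le_rfl⟩).congr hwy (hwy t ⟨hac, le_rfl⟩)
    have h2 : HasDerivWithinAt w (B t *ᵥ y t) (Icc t d) t := by
      have h := (hz t ⟨le_rfl, hcd⟩).congr hwz (hwz t ⟨le_rfl, hcd⟩)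
      rw [show B t *ᵥ y t = B t *ᵥ z t by rw [hyz]]
      exact h
    have h3 := h1.union h2
    rw [Icc_union_Icc_eq_Icc hac hcd] at h3
    rw [show B t *ᵥ w t = B t *ᵥ y t by rw [hwy t ⟨hac, le_rfl⟩]]
    exact h3
  · have ht' : t ∈ Icc c d := ⟨htc.le, ht.2⟩
    have hset : Icc c d =ᶠ[nhds t] Icc a d := by
      rw [Filter.eventuallyEq_set]
      filter_upwards [Ioi_mem_nhds htc] with u (hu : c < u)
      simp only [mem_Icc]
      constructor
      · rintro ⟨_, h2⟩; exact ⟨le_trans hac hu.le, h2⟩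
      · rintro ⟨_, h2⟩; exact ⟨hu.le, h2⟩
    have h2 := (hz t ht').congr_set hset
    have hwt : w t = z t := if_neg (not_le.2 htc)
    have h3 := h2.congr_of_eventuallyEq
      (by filter_upwards [mem_nhdsWithin_of_mem_nhds (Ioi_mem_nhds htc)] with u (hu : c < u)
          exact if_neg (not_le.2 hu)) hwt
    rw [show B t *ᵥ w t = B t *ᵥ z t by rw [hwt]]
    exact h3

/-- Global existence for a linear ODE with data at the left endpoint. -/
lemma ode_exists_right (B : ℝ → Matrix (Fin 4) (Fin 4) ℂ)
    (hB : ∀ i j, Continuous fun t => B t i j) (K : ℝ)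
    (hK : ∀ t, entSum (B t) ≤ K) (a b : ℝ) (hab : a ≤ b) (x₀ : Fin 4 → ℂ) :
    ∃ y : ℝ → Fin 4 → ℂ, y a = x₀ ∧
      ∀ t ∈ Icc a b, HasDerivWithinAt y (B t *ᵥ y t) (Icc a b) t := by
  have hK0 : 0 ≤ K := le_trans (entSum_nonneg _) (hK 0)
  set h : ℝ := 1 / (2 * K + 1) with hh
  have hK1 : 0 < 2 * K + 1 := by linarith
  have hh0 : 0 < h := by positivity
  have main : ∀ n : ℕ, ∃ y : ℝ → Fin 4 → ℂ, y a = x₀ ∧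
      ∀ t ∈ Icc a (min b (a + n * h)),
        HasDerivWithinAt y (B t *ᵥ y t) (Icc a (min b (a + n * h))) t := by
    intro n
    induction n with
    | zero =>
      refine ⟨fun _ => x₀, rfl, ?_⟩
      intro t ht
      simp only [Nat.cast_zero, zero_mul, add_zero, min_eq_right hab, Icc_self,
        mem_singleton_iff] at ht ⊢
      subst ht
      exact hasDerivWithinAt_singleton' _ _ _
    | succ n ih =>
      obtain ⟨y, hy0, hy⟩ := ih
      by_cases hb : b ≤ a + n * h
      · have e1 : min b (a + n * h) = b := min_eq_left hb
        have e2 : min b (a + (n + 1 : ℕ) * h) = b := by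
          refine min_eq_left ?_
          push_cast
          nlinarith
        refine ⟨y, hy0, ?_⟩
        rw [e2]; rw [e1] at hy; exact hy
      · push_neg at hb
        set c := a + n * h with hc
        have e1 : min b c = c := min_eq_right hb.le
        set e := min b (c + h) with he
        have hce : c ≤ e := le_min hb.le (by linarith)
        have hac : a ≤ c := by
          have : (0:ℝ) ≤ n * h := mul_nonneg (Nat.cast_nonneg n) hh0.le
          linarith
        rw [e1] at hy
        have hsmall : (2 * K + 1) * (e - c) ≤ 1 := by
          have h1 : e - c ≤ h := by
            have := min_le_right b (c + h)
            rw [← he] at this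
            linarith
          have h3 : (2 * K + 1) * h = 1 := by
            rw [hh]; field_simp
          calc (2 * K + 1) * (e - c) ≤ (2 * K + 1) * h :=
                mul_le_mul_of_nonneg_left h1 hK1.le
            _ = 1 := h3
        obtain ⟨z, hz0, hz⟩ := ode_local B hB K hK c e hce hsmall (y c)
        obtain ⟨w, hweq, hw⟩ := glue_ode B a c e hac hce y z hz0.symm hy hz
        have e2 : min b (a + (n + 1 : ℕ) * h) = e := by
          rw [he, hc]
          congr 1
          push_cast
          ring
        refine ⟨w, ?_, ?_⟩
        · rw [hweq a ⟨le_rfl, hac⟩, hy0]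
        · rw [e2]; exact hw
  obtain ⟨n, hn⟩ := exists_nat_ge ((b - a) / h)
  obtain ⟨y, hy0, hy⟩ := main n
  have hmin : min b (a + n * h) = b := by
    refine min_eq_left ?_
    rw [div_le_iff₀ hh0] at hn
    linarith
  rw [hmin] at hy
  exact ⟨y, hy0, hy⟩

/-- Global existence for a linear ODE with data at the right endpoint. -/
lemma ode_exists_left (B : ℝ → Matrix (Fin 4) (Fin 4) ℂ)
    (hB : ∀ i j, Continuous fun t => B t i j) (K : ℝ)
    (hK : ∀ t, entSum (B t) ≤ K) (a b : ℝ) (hab : a ≤ b) (x₀ : Fin 4 → ℂ) :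
    ∃ y : ℝ → Fin 4 → ℂ, y b = x₀ ∧
      ∀ t ∈ Icc a b, HasDerivWithinAt y (B t *ᵥ y t) (Icc a b) t := by
  set B' : ℝ → Matrix (Fin 4) (Fin 4) ℂ := fun t => -B (a + b - t) with hB'
  have hB'c : ∀ i j, Continuous fun t => B' t i j := by
    intro i j
    simp only [hB', Matrix.neg_apply]
    exact ((hB i j).comp (by continuity : Continuous fun t : ℝ => a + b - t)).neg
  have hK' : ∀ t, entSum (B' t) ≤ K := by
    intro t
    have : entSum (B' t) = entSum (B (a + b - t)) := by
      simp [entSum, hB', Matrix.neg_apply]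
    rw [this]; exact hK _
  obtain ⟨z, hz0, hz⟩ := ode_exists_right B' hB'c K hK' a b hab x₀
  refine ⟨fun t => z (a + b - t), by simpa using hz0, ?_⟩
  intro t ht
  have hmem : a + b - t ∈ Icc a b := ⟨by linarith [ht.2], by linarith [ht.1]⟩
  have h1 := hz _ hmem
  have hφ : HasDerivWithinAt (fun u : ℝ => a + b - u) (-1) (Icc a b) t :=
    ((hasDerivAt_id t).const_sub (a + b)).hasDerivWithinAt
  have hmaps : MapsTo (fun u : ℝ => a + b - u) (Icc a b) (Icc a b) := by
    intro u hu
    simp only [mem_Icc] at hu ⊢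
    exact ⟨by linarith [hu.1, hu.2], by linarith [hu.1, hu.2]⟩
  have h2 := h1.scomp (x := t) hφ hmaps
  have heq : a + b - (a + b - t) = t := by ring
  have h3 : HasDerivWithinAt (fun u : ℝ => z (a + b - u))
      ((-1 : ℝ) • (B' (a + b - t) *ᵥ z (a + b - t))) (Icc a b) t := h2
  convert h3 using 1
  simp only [hB', heq, Matrix.neg_mulVec, neg_smul, one_smul, neg_neg]

/-- Uniqueness: a solution vanishing at the right endpoint vanishes. -/
lemma ode_unique_left (B : ℝ → Matrix (Fin 4) (Fin 4) ℂ) (K : ℝ)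
    (hK : ∀ t, entSum (B t) ≤ K) (a b : ℝ) (y : ℝ → Fin 4 → ℂ)
    (hy : ∀ t ∈ Icc a b, HasDerivWithinAt y (B t *ᵥ y t) (Icc a b) t)
    (hb : y b = 0) : ∀ t ∈ Icc a b, y t = 0 := by
  have happ := ODE_solution_unique_of_mem_Icc_left
    (v := fun t v => B t *ᵥ v) (s := fun _ => (univ : Set (Fin 4 → ℂ)))
    (K := K.toNNReal) (f := y) (g := fun _ => 0) (a := a) (b := b)
    (fun t _ => (lipschitz_mulVec (B t) K (hK t)).lipschitzOnWith)
    (fun t ht => (hy t ht).continuousWithinAt)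
    ?_ (fun _ _ => mem_univ _) continuousOn_const ?_ (fun _ _ => mem_univ _) (by simpa using hb)
  · exact fun t ht => happ ht
  · intro t ht
    have hmem : Icc a t ∈ nhdsWithin t (Iic t) := by
      rw [← Ici_inter_Iic]
      exact Filter.inter_mem (mem_nhdsWithin_of_mem_nhds (Ici_mem_nhds ht.1)) self_mem_nhdsWithin
    exact ((hy t ⟨le_of_lt ht.1, ht.2⟩).mono (Icc_subset_Icc_right ht.2)).mono_of_mem_nhdsWithin hmem
  · intro t _
    have : (fun t v => B t *ᵥ v) t ((fun _ => (0 : Fin 4 → ℂ)) t) = 0 := by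
      simp [Matrix.mulVec_zero]
    rw [show B t *ᵥ 0 = 0 from this]
    exact hasDerivWithinAt_const _ _ _

end EigenAux

namespace EigenAux

/-- Uniqueness: a solution vanishing at the left endpoint vanishes. -/
lemma ode_unique_right (B : ℝ → Matrix (Fin 4) (Fin 4) ℂ) (K : ℝ)
    (hK : ∀ t, entSum (B t) ≤ K) (a b : ℝ) (y : ℝ → Fin 4 → ℂ)
    (hy : ∀ t ∈ Icc a b, HasDerivWithinAt y (B t *ᵥ y t) (Icc a b) t)
    (ha : y a = 0) : ∀ t ∈ Icc a b, y t = 0 := by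
  have happ := ODE_solution_unique_of_mem_Icc_right
    (v := fun t v => B t *ᵥ v) (s := fun _ => (univ : Set (Fin 4 → ℂ)))
    (K := K.toNNReal) (f := y) (g := fun _ => 0) (a := a) (b := b)
    (fun t _ => (lipschitz_mulVec (B t) K (hK t)).lipschitzOnWith)
    (fun t ht => (hy t ht).continuousWithinAt)
    ?_ (fun _ _ => mem_univ _) continuousOn_const ?_ (fun _ _ => mem_univ _) (by simpa using ha)
  · exact fun t ht => happ ht
  · intro t ht
    have hmem : Icc t b ∈ nhdsWithin t (Ici t) := by
      rw [← Ici_inter_Iic]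
      exact Filter.inter_mem self_mem_nhdsWithin (mem_nhdsWithin_of_mem_nhds (Iic_mem_nhds ht.2))
    exact ((hy t ⟨ht.1, le_of_lt ht.2⟩).mono (Icc_subset_Icc_left ht.1)).mono_of_mem_nhdsWithin hmem
  · intro t _
    have : (fun t v => B t *ᵥ v) t ((fun _ => (0 : Fin 4 → ℂ)) t) = 0 := by
      simp [Matrix.mulVec_zero]
    rw [show B t *ᵥ 0 = 0 from this]
    exact hasDerivWithinAt_const _ _ _

/-- A function with vanishing derivative on `[0,1]` has equal endpoint values. -/
lemma endpoint_eq_of_deriv_zero (P : ℝ → ℂ)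
    (hP : ∀ t ∈ Icc (0:ℝ) 1, HasDerivWithinAt P 0 (Icc (0:ℝ) 1) t) : P 1 = P 0 := by
  have hcont : ContinuousOn P (Icc (0:ℝ) 1) := fun t ht => (hP t ht).continuousWithinAt
  have hderiv : ∀ t ∈ Ico (0:ℝ) 1, HasDerivWithinAt P 0 (Ici t) t := by
    intro t ht
    have hmem : Icc t 1 ∈ nhdsWithin t (Ici t) := by
      rw [← Ici_inter_Iic]
      exact Filter.inter_mem self_mem_nhdsWithin (mem_nhdsWithin_of_mem_nhds (Iic_mem_nhds ht.2))
    exact ((hP t ⟨ht.1, le_of_lt ht.2⟩).mono (Icc_subset_Icc_left ht.1)).mono_of_mem_nhdsWithin hmem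
  exact constant_of_has_deriv_right_zero hcont hderiv 1 (right_mem_Icc.2 zero_le_one)

/-- Component of a vector-valued derivative. -/
lemma comp_apply {y : ℝ → Fin 4 → ℂ} {w : Fin 4 → ℂ} {s : Set ℝ} {x : ℝ}
    (h : HasDerivWithinAt y w s x) (i : Fin 4) :
    HasDerivWithinAt (fun t => y t i) (w i) s x := by
  have := ((ContinuousLinearMap.proj (R := ℂ) (φ := fun _ : Fin 4 => ℂ) i).restrictScalars
    ℝ).hasFDerivAt.comp_hasDerivWithinAt x h
  exact this

/-- Conjugation of a scalar derivative. -/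
lemma hasDerivWithinAt_conj {w : ℝ → ℂ} {w' : ℂ} {s : Set ℝ} {x : ℝ}
    (h : HasDerivWithinAt w w' s x) :
    HasDerivWithinAt (fun t => (starRingEnd ℂ) (w t)) ((starRingEnd ℂ) w') s x := by
  have := (Complex.conjCLE.toContinuousLinearMap.hasFDerivAt
    (x := w x)).comp_hasDerivWithinAt x h
  exact this

/-- The conserved pairing between a solution of `𝓛₁`'s system and one of the adjoint system. -/
lemma pairing_const (r₀ τ₁ τ₂ : ℝ → ℂ) (l : ℂ) (y z : ℝ → Fin 4 → ℂ)
    (hy : ∀ x ∈ Icc (0:ℝ) 1, HasDerivWithinAt y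
      ((assocF r₀ τ₁ τ₂ x + lamMat l) *ᵥ (y x)) (Icc (0:ℝ) 1) x)
    (hz : ∀ x ∈ Icc (0:ℝ) 1, HasDerivWithinAt z
      ((assocF (fun t => (starRingEnd ℂ) (r₀ t)) (fun t => -(starRingEnd ℂ) (τ₁ t))
        (fun t => (starRingEnd ℂ) (τ₂ t)) x + lamMat ((starRingEnd ℂ) l)) *ᵥ (z x))
      (Icc (0:ℝ) 1) x) :
    (starRingEnd ℂ) (z 1 0) * y 1 3 - (starRingEnd ℂ) (z 1 1) * y 1 2
      + (starRingEnd ℂ) (z 1 2) * y 1 1 - (starRingEnd ℂ) (z 1 3) * y 1 0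
    = (starRingEnd ℂ) (z 0 0) * y 0 3 - (starRingEnd ℂ) (z 0 1) * y 0 2
      + (starRingEnd ℂ) (z 0 2) * y 0 1 - (starRingEnd ℂ) (z 0 3) * y 0 0 := by
  set P : ℝ → ℂ := fun x => (starRingEnd ℂ) (z x 0) * y x 3 - (starRingEnd ℂ) (z x 1) * y x 2
      + (starRingEnd ℂ) (z x 2) * y x 1 - (starRingEnd ℂ) (z x 3) * y x 0 with hPdef
  refine endpoint_eq_of_deriv_zero P ?_
  intro x hx
  have hy' := hy x hx
  have hz' := hz x hx
  rw [mulVec_expand] at hy' hz'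
  have H := ((((hasDerivWithinAt_conj (comp_apply hz' 0)).mul (comp_apply hy' 3)).sub
      ((hasDerivWithinAt_conj (comp_apply hz' 1)).mul (comp_apply hy' 2))).add
      ((hasDerivWithinAt_conj (comp_apply hz' 2)).mul (comp_apply hy' 1))).sub
      ((hasDerivWithinAt_conj (comp_apply hz' 3)).mul (comp_apply hy' 0))
  convert H using 1
  · rfl
  · rfl
  simp only [Matrix.cons_val_zero, Matrix.cons_val_one, Matrix.head_cons,
    Matrix.cons_val_two, Matrix.tail_cons, Matrix.cons_val_three,
    s1F_adj, s0F_adj, map_add, _root_.map_mul, map_sub, map_neg, map_pow,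
    Complex.conj_conj, map_ofNat]
  ring

end EigenAux

namespace EigenAux

/-- Clamp to `[0,1]`. -/
noncomputable def cl (t : ℝ) : ℝ := max 0 (min 1 t)

lemma continuous_cl : Continuous cl := continuous_const.max (continuous_const.min continuous_id)

lemma cl_mem (t : ℝ) : cl t ∈ Icc (0:ℝ) 1 :=
  ⟨le_max_left _ _, max_le zero_le_one (min_le_left _ _)⟩

lemma cl_eq_self {t : ℝ} (ht : t ∈ Icc (0:ℝ) 1) : cl t = t := by
  rw [cl, min_eq_right ht.2, max_eq_right ht.1]

lemma cont_comp_cl {φ : ℝ → ℂ} (h : ContinuousOn φ (Icc 0 1)) :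
    Continuous fun t => φ (cl t) :=
  h.comp_continuous continuous_cl cl_mem

lemma contOn_primitive {f : ℝ → ℂ} (hf : IntegrableOn f (Ioc 0 1)) :
    ContinuousOn (fun x => ∫ t in (0:ℝ)..x, f t) (Icc 0 1) := by
  have h := intervalIntegral.continuousOn_primitive_interval (μ := volume) (a := (0:ℝ))
    (b := 1) (f := f) ?_
  · rwa [uIcc_of_le zero_le_one] at h
  · rw [uIcc_of_le zero_le_one]
    exact (integrableOn_Icc_iff_integrableOn_Ioc).2 hf

lemma contOn_s0F {r₀ : ℝ → ℂ} (hr : IntegrableOn r₀ (Ioc 0 1)) :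
    ContinuousOn (s0F r₀) (Icc 0 1) := by
  unfold s0F
  exact (contOn_primitive hr).sub
    ((Complex.continuous_ofReal.mul continuous_const).continuousOn)

/-- Entrywise continuity of the clamped associated matrix. -/
lemma assoc_cont (r₀ τ₁ τ₂ : ℝ → ℂ) (l : ℂ)
    (h0 : Continuous fun t => s0F r₀ (cl t))
    (h1 : Continuous fun t => s1F τ₁ (cl t))
    (h2 : Continuous fun t => τ₂ (cl t)) :
    ∀ i j, Continuous fun t => (assocF r₀ τ₁ τ₂ (cl t) + lamMat l) i j := by
  intro i j
  fin_cases i <;> fin_cases j <;>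
    simp [assocF_eq, lamMat, Matrix.add_apply] <;>
    first
      | fun_prop
      | exact h2.neg.add (continuous_const.mul h0)

/-- A uniform bound for a clamped matrix function. -/
lemma exists_bound (B : ℝ → Matrix (Fin 4) (Fin 4) ℂ)
    (hB : ∀ i j, Continuous fun t => B t i j) (hper : ∀ t, B t = B (cl t)) :
    ∃ K : ℝ, ∀ t, entSum (B t) ≤ K := by
  have hm : Continuous fun t => entSum (B t) :=
    continuous_finset_sum _ fun i _ => continuous_finset_sum _ fun j _ => (hB i j).norm
  obtain ⟨t₀, _, hmax⟩ := isCompact_Icc.exists_isMaxOn (α := ℝ)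
    (s := Icc (0:ℝ) 1) ⟨0, left_mem_Icc.2 zero_le_one⟩ hm.continuousOn
  refine ⟨entSum (B t₀), fun t => ?_⟩
  rw [hper t]
  exact hmax (cl_mem t)

end EigenAux

namespace EigenAux

/-- `e₄`, the fourth standard basis vector. -/
noncomputable def e4 : Fin 4 → ℂ := fun i => if i = 3 then 1 else 0

lemma e4_ne_zero : e4 ≠ 0 := by
  intro h
  have := congrFun h 3
  simp [e4] at this

section Transfer

variable (r₀ τ₁ τ₂ : ℝ → ℂ) (l : ℂ)

lemma transfer_setup
    (h0 : Continuous fun t => s0F r₀ (cl t))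
    (h1 : Continuous fun t => s1F τ₁ (cl t))
    (h2 : Continuous fun t => τ₂ (cl t)) :
    ∃ K : ℝ, (∀ i j, Continuous fun t => (assocF r₀ τ₁ τ₂ (cl t) + lamMat l) i j) ∧
      (∀ t, entSum (assocF r₀ τ₁ τ₂ (cl t) + lamMat l) ≤ K) := by
  have hBc := assoc_cont r₀ τ₁ τ₂ l h0 h1 h2
  have hper : ∀ t, (assocF r₀ τ₁ τ₂ (cl t) + lamMat l)
      = (assocF r₀ τ₁ τ₂ (cl (cl t)) + lamMat l) := by
    intro t
    rw [cl_eq_self (cl_mem t)]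
  obtain ⟨K, hK⟩ := exists_bound (fun t => assocF r₀ τ₁ τ₂ (cl t) + lamMat l) hBc hper
  exact ⟨K, hBc, hK⟩

lemma adj_conts
    (h0 : Continuous fun t => s0F r₀ (cl t))
    (h1 : Continuous fun t => s1F τ₁ (cl t))
    (h2 : Continuous fun t => τ₂ (cl t)) :
    (Continuous fun t => s0F (fun u => (starRingEnd ℂ) (r₀ u)) (cl t)) ∧
    (Continuous fun t => s1F (fun u => -(starRingEnd ℂ) (τ₁ u)) (cl t)) ∧
    (Continuous fun t => (starRingEnd ℂ) (τ₂ (cl t))) := by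
  refine ⟨?_, ?_, Complex.continuous_conj.comp h2⟩
  · simp only [s0F_adj]
    exact Complex.continuous_conj.comp h0
  · simp only [s1F_adj]
    exact (Complex.continuous_conj.comp h1).neg

lemma forward
    (h0 : Continuous fun t => s0F r₀ (cl t))
    (h1 : Continuous fun t => s1F τ₁ (cl t))
    (h2 : Continuous fun t => τ₂ (cl t))
    (hE : IsEigenL1 r₀ τ₁ τ₂ l) :
    IsEigenL3 (fun t => starRingEnd ℂ (r₀ t)) (fun t => -starRingEnd ℂ (τ₁ t))
      (fun t => starRingEnd ℂ (τ₂ t)) (starRingEnd ℂ l) := by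
  obtain ⟨y, hy, ⟨x₀, hx₀, hynz⟩, hy00, hy10, hy11, hy12⟩ := hE
  obtain ⟨h0', h1', h2'⟩ := adj_conts r₀ τ₁ τ₂ h0 h1 h2
  obtain ⟨K, hBc, hK⟩ := transfer_setup r₀ τ₁ τ₂ l h0 h1 h2
  obtain ⟨Kt, hBtc, hKt⟩ := transfer_setup (fun t => starRingEnd ℂ (r₀ t))
    (fun t => -starRingEnd ℂ (τ₁ t)) (fun t => starRingEnd ℂ (τ₂ t)) (starRingEnd ℂ l)
    h0' h1' h2'
  -- `y` solves the clamped system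
  have hyB : ∀ t ∈ Icc (0:ℝ) 1, HasDerivWithinAt y
      ((assocF r₀ τ₁ τ₂ (cl t) + lamMat l) *ᵥ y t) (Icc (0:ℝ) 1) t := by
    intro t ht
    rw [cl_eq_self ht]
    exact hy t ht
  -- solve the adjoint system with initial value `e₄` at `0`
  obtain ⟨z, hz0, hz⟩ := ode_exists_right _ hBtc Kt hKt 0 1 zero_le_one e4
  have hzA : ∀ x ∈ Icc (0:ℝ) 1, HasDerivWithinAt z
      ((assocF (fun t => starRingEnd ℂ (r₀ t)) (fun t => -starRingEnd ℂ (τ₁ t))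
        (fun t => starRingEnd ℂ (τ₂ t)) x + lamMat (starRingEnd ℂ l)) *ᵥ z x)
      (Icc (0:ℝ) 1) x := by
    intro x hx
    have := hz x hx
    rwa [cl_eq_self hx] at this
  -- pairing
  have hpair := pairing_const r₀ τ₁ τ₂ l y z hy hzA
  have hz00 : z 0 0 = 0 := by rw [hz0]; simp [e4]
  have hz01 : z 0 1 = 0 := by rw [hz0]; simp [e4]
  have hz02 : z 0 2 = 0 := by rw [hz0]; simp [e4]
  have hz03 : z 0 3 = 1 := by rw [hz0]; simp [e4]
  rw [hz00, hz01, hz02, hz03, hy00, hy10, hy11, hy12] at hpair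
  simp only [map_zero, _root_.map_one, zero_mul, mul_zero, one_mul, sub_zero, add_zero,
    zero_sub, neg_zero] at hpair
  -- `y 1 ≠ 0`
  have hy1ne : y 1 ≠ 0 := by
    intro h
    exact hynz (ode_unique_left _ K hK 0 1 y hyB h x₀ hx₀)
  have hy13 : y 1 3 ≠ 0 := by
    intro h
    apply hy1ne
    funext i
    fin_cases i <;> simp [hy10, hy11, hy12, h]
  have hz10 : z 1 0 = 0 := by
    have h := mul_eq_zero.1 hpair
    rcases h with h | h
    · have := congrArg (starRingEnd ℂ) h
      simpa using this
    · exact absurd h hy13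
  refine ⟨z, hzA, ⟨0, left_mem_Icc.2 zero_le_one, by rw [hz0]; exact e4_ne_zero⟩,
    hz00, hz01, hz02, hz10⟩

lemma backward
    (h0 : Continuous fun t => s0F r₀ (cl t))
    (h1 : Continuous fun t => s1F τ₁ (cl t))
    (h2 : Continuous fun t => τ₂ (cl t))
    (hE : IsEigenL3 (fun t => starRingEnd ℂ (r₀ t)) (fun t => -starRingEnd ℂ (τ₁ t))
      (fun t => starRingEnd ℂ (τ₂ t)) (starRingEnd ℂ l)) :
    IsEigenL1 r₀ τ₁ τ₂ l := by
  obtain ⟨z, hz, ⟨x₀, hx₀, hznz⟩, hz00, hz01, hz02, hz10⟩ := hE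
  obtain ⟨h0', h1', h2'⟩ := adj_conts r₀ τ₁ τ₂ h0 h1 h2
  obtain ⟨K, hBc, hK⟩ := transfer_setup r₀ τ₁ τ₂ l h0 h1 h2
  obtain ⟨Kt, hBtc, hKt⟩ := transfer_setup (fun t => starRingEnd ℂ (r₀ t))
    (fun t => -starRingEnd ℂ (τ₁ t)) (fun t => starRingEnd ℂ (τ₂ t)) (starRingEnd ℂ l)
    h0' h1' h2'
  have hzB : ∀ t ∈ Icc (0:ℝ) 1, HasDerivWithinAt z
      ((assocF (fun t => starRingEnd ℂ (r₀ t)) (fun t => -starRingEnd ℂ (τ₁ t))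
        (fun t => starRingEnd ℂ (τ₂ t)) (cl t) + lamMat (starRingEnd ℂ l)) *ᵥ z t)
      (Icc (0:ℝ) 1) t := by
    intro t ht
    rw [cl_eq_self ht]
    exact hz t ht
  -- solve the original system with terminal value `e₄` at `1`
  obtain ⟨y, hy1, hy⟩ := ode_exists_left _ hBc K hK 0 1 zero_le_one e4
  have hyA : ∀ x ∈ Icc (0:ℝ) 1, HasDerivWithinAt y
      ((assocF r₀ τ₁ τ₂ x + lamMat l) *ᵥ y x) (Icc (0:ℝ) 1) x := by
    intro x hx
    have := hy x hx
    rwa [cl_eq_self hx] at this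
  have hpair := pairing_const r₀ τ₁ τ₂ l y z hyA hz
  have hy10 : y 1 0 = 0 := by rw [hy1]; simp [e4]
  have hy11 : y 1 1 = 0 := by rw [hy1]; simp [e4]
  have hy12 : y 1 2 = 0 := by rw [hy1]; simp [e4]
  have hy13 : y 1 3 = 1 := by rw [hy1]; simp [e4]
  rw [hy10, hy11, hy12, hy13, hz00, hz01, hz02, hz10] at hpair
  simp only [map_zero, zero_mul, mul_zero, mul_one, sub_zero, add_zero, zero_add,
    zero_sub] at hpair
  -- `z 0 ≠ 0`
  have hz0ne : z 0 ≠ 0 := by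
    intro h
    exact hznz (ode_unique_right _ Kt hKt 0 1 z hzB h x₀ hx₀)
  have hz03 : z 0 3 ≠ 0 := by
    intro h
    apply hz0ne
    funext i
    fin_cases i <;> simp [hz00, hz01, hz02, h]
  have hy00 : y 0 0 = 0 := by
    have h := hpair.symm
    rw [neg_eq_zero] at h
    rcases mul_eq_zero.1 h with h' | h'
    · exact absurd (by simpa using congrArg (starRingEnd ℂ) h') hz03
    · exact h'
  exact ⟨y, hyA, ⟨1, right_mem_Icc.2 zero_le_one, by rw [hy1]; exact e4_ne_zero⟩,
    hy00, hy10, hy11, hy12⟩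

end Transfer

end EigenAux

/-- `λ` is an eigenvalue of `𝓛₁` for the data `(r₀, τ₁, τ₂)` iff `conj λ`
is an eigenvalue of `𝓛₃` for the adjoint data `(conj r₀, −conj τ₁, conj τ₂)`. -/
theorem eigen_L1_iff_eigen_L3_adjoint
    (r₀ τ₁ τ₂ dτ₂ : ℝ → ℂ)
    (hr₀ : MemLp r₀ 2 (volume.restrict (Set.Ioc (0:ℝ) 1)))
    (hτ₁ : MemLp τ₁ 2 (volume.restrict (Set.Ioc (0:ℝ) 1)))
    (hdτ₂ : MemLp dτ₂ 2 (volume.restrict (Set.Ioc (0:ℝ) 1)))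
    (hτ₂ : ∀ x ∈ Set.Icc (0:ℝ) 1, τ₂ x = τ₂ 0 + ∫ t in (0:ℝ)..x, dτ₂ t)
    (l : ℂ) :
    IsEigenL1 r₀ τ₁ τ₂ l ↔
      IsEigenL3 (fun t => starRingEnd ℂ (r₀ t)) (fun t => -starRingEnd ℂ (τ₁ t))
        (fun t => starRingEnd ℂ (τ₂ t)) (starRingEnd ℂ l) := by
  have hfin : IsFiniteMeasure (volume.restrict (Set.Ioc (0:ℝ) 1)) :=
    ⟨by rw [Measure.restrict_apply_univ]; exact measure_Ioc_lt_top⟩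
  have hrI : IntegrableOn r₀ (Set.Ioc 0 1) := hr₀.integrable one_le_two
  have hτ₁I : IntegrableOn τ₁ (Set.Ioc 0 1) := hτ₁.integrable one_le_two
  have hdI : IntegrableOn dτ₂ (Set.Ioc 0 1) := hdτ₂.integrable one_le_two
  have h0 : Continuous fun t => EigenAux.s0F r₀ (EigenAux.cl t) :=
    EigenAux.cont_comp_cl (EigenAux.contOn_s0F hrI)
  have h1 : Continuous fun t => EigenAux.s1F τ₁ (EigenAux.cl t) :=
    EigenAux.cont_comp_cl (EigenAux.contOn_primitive hτ₁I)
  have hτ₂c : ContinuousOn τ₂ (Set.Icc 0 1) := by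
    have hc : ContinuousOn (fun x => τ₂ 0 + ∫ t in (0:ℝ)..x, dτ₂ t) (Set.Icc 0 1) :=
      continuousOn_const.add (EigenAux.contOn_primitive hdI)
    exact hc.congr fun x hx => hτ₂ x hx
  have h2 : Continuous fun t => τ₂ (EigenAux.cl t) := EigenAux.cont_comp_cl hτ₂c
  exact ⟨EigenAux.forward r₀ τ₁ τ₂ l h0 h1 h2, EigenAux.backward r₀ τ₁ τ₂ l h0 h1 h2⟩
end

section
/- Let λ ∈ ℂ. The boundary value problem y''''(x) = λy(x) on [0,1], y(0) = y'(0) = y''(0) = 0, y(1) = 0, has a nonzero four-times continuously differentiable solution y : [0,1] → ℂ if and only if Σ_{k=0}^∞ λᵏ/(4k+3)! = 0. -/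
set_option maxHeartbeats 1000000

open Set Metric

namespace ModelProblem

/-- The `j`-th auxiliary entire function `x ↦ Σ_k l^k x^(4k+j)/(4k+j)!`. -/
noncomputable def gf (l : ℂ) (j : ℕ) (x : ℝ) : ℂ :=
  ∑' k : ℕ, l ^ k * (x : ℂ) ^ (4 * k + j) / ((4 * k + j).factorial : ℂ)

lemma summable_aux (c B : ℝ) (hc : 0 ≤ c) (hB : 0 ≤ B) (j : ℕ) :
    Summable (fun k : ℕ => c ^ k * B ^ (4 * k + j) / ((4 * k + j).factorial : ℝ)) := by
  have h1 : Summable (fun m : ℕ => ((1 + c) * (1 + B)) ^ m / (m.factorial : ℝ)) :=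
    Real.summable_pow_div_factorial _
  have h2 : Summable ((fun m : ℕ => ((1 + c) * (1 + B)) ^ m / (m.factorial : ℝ)) ∘
      (fun k : ℕ => 4 * k + j)) :=
    h1.comp_injective (fun a b hab => by omega)
  refine Summable.of_nonneg_of_le (fun k => by positivity) (fun k => ?_) h2
  have hfac : (0:ℝ) < ((4 * k + j).factorial : ℝ) := by
    exact_mod_cast (4 * k + j).factorial_pos
  rw [Function.comp, div_le_div_iff_of_pos_right hfac]
  calc c ^ k * B ^ (4 * k + j)
      ≤ (1 + c) ^ (4 * k + j) * (1 + B) ^ (4 * k + j) := by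
        apply mul_le_mul _ (pow_le_pow_left₀ hB (by linarith) _) (by positivity) (by positivity)
        calc c ^ k ≤ (1 + c) ^ k := pow_le_pow_left₀ hc (by linarith) k
          _ ≤ (1 + c) ^ (4 * k + j) := pow_le_pow_right₀ (by linarith) (by omega)
    _ = ((1 + c) * (1 + B)) ^ (4 * k + j) := (mul_pow _ _ _).symm

lemma norm_term (l : ℂ) (j k : ℕ) (x : ℝ) :
    ‖l ^ k * (x : ℂ) ^ (4 * k + j) / ((4 * k + j).factorial : ℂ)‖
      = ‖l‖ ^ k * |x| ^ (4 * k + j) / ((4 * k + j).factorial : ℝ) := by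
  simp [norm_div, norm_mul, norm_pow, Complex.norm_real, Real.norm_eq_abs,
    Complex.norm_natCast]

lemma summable_gf (l : ℂ) (j : ℕ) (x : ℝ) :
    Summable (fun k : ℕ => l ^ k * (x : ℂ) ^ (4 * k + j) / ((4 * k + j).factorial : ℂ)) := by
  apply Summable.of_norm
  simp only [norm_term]
  exact summable_aux ‖l‖ |x| (norm_nonneg _) (abs_nonneg _) j

lemma hasDerivAt_term (l : ℂ) (n m : ℕ) (y : ℝ) :
    HasDerivAt (fun z : ℝ => l ^ n * (z : ℂ) ^ (m + 1) / ((m + 1).factorial : ℂ))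
      (l ^ n * (y : ℂ) ^ m / ((m).factorial : ℂ)) y := by
  have h1 : HasDerivAt (fun z : ℂ => z ^ (m + 1)) ((m + 1 : ℕ) * (y : ℂ) ^ m) (y : ℂ) := by
    simpa using hasDerivAt_pow (m + 1) (y : ℂ)
  have h2 := ((h1.comp_ofReal).const_mul (l ^ n)).div_const (((m + 1).factorial : ℂ))
  convert h2 using 1
  · rfl
  have hm : ((m.factorial : ℂ)) ≠ 0 := by exact_mod_cast m.factorial_ne_zero
  have hm2 : (((m+1).factorial : ℂ)) ≠ 0 := by exact_mod_cast (m+1).factorial_ne_zero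
  rw [div_eq_div_iff hm hm2, Nat.factorial_succ]
  push_cast
  ring

lemma hasDerivAt_gf_succ (l : ℂ) (j : ℕ) (x : ℝ) :
    HasDerivAt (gf l (j + 1)) (gf l j x) x := by
  set R : ℝ := |x| + 1 with hR
  have hxR : x ∈ ball (0:ℝ) R := by
    rw [mem_ball, Real.dist_eq, sub_zero]
    simp only [hR]; linarith
  have key : HasDerivAt
      (fun z : ℝ => ∑' k : ℕ, l ^ k * (z : ℂ) ^ (4 * k + (j+1)) / ((4 * k + (j+1)).factorial : ℂ))
      (∑' k : ℕ, l ^ k * (x : ℂ) ^ (4 * k + j) / ((4 * k + j).factorial : ℂ)) x := by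
    apply hasDerivAt_tsum_of_isPreconnected
      (u := fun k : ℕ => ‖l‖ ^ k * R ^ (4 * k + j) / ((4 * k + j).factorial : ℝ))
      (summable_aux ‖l‖ R (norm_nonneg _) (by positivity) j)
      isOpen_ball ((convex_ball (0:ℝ) R).isPreconnected)
      (g' := fun k (y : ℝ) => l ^ k * (y : ℂ) ^ (4 * k + j) / ((4 * k + j).factorial : ℂ))
      ?_ ?_ hxR (summable_gf l (j+1) x) hxR
    · intro n y _
      exact hasDerivAt_term l n (4 * n + j) y
    · intro n y hy
      rw [norm_term]
      have hyR : |y| ≤ R := by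
        have := mem_ball_iff_norm.1 hy
        simp [Real.norm_eq_abs] at this
        have : |y| < R := by simpa [Real.dist_eq] using (mem_ball.1 hy)
        linarith
      rw [div_le_div_iff_of_pos_right (by exact_mod_cast (4*n+j).factorial_pos :
        (0:ℝ) < ((4*n+j).factorial : ℝ))]
      exact mul_le_mul_of_nonneg_left (pow_le_pow_left₀ (abs_nonneg _) hyR _)
        (by positivity)
  exact key

lemma gf_zero_shift (l : ℂ) (x : ℝ) :
    gf l 0 x = 1 + ∑' k : ℕ, l ^ (k+1) * (x : ℂ) ^ (4 * k + 4) / ((4 * k + 4).factorial : ℂ) := by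
  rw [gf, Summable.tsum_eq_zero_add (summable_gf l 0 x)]
  have e0 : l ^ 0 * ((x:ℂ)) ^ (4 * 0 + 0) / ((4 * 0 + 0).factorial : ℂ) = 1 := by simp
  rw [e0]
  congr 1

lemma summable_gf_shift (l : ℂ) (x : ℝ) :
    Summable (fun k : ℕ => l ^ (k+1) * (x : ℂ) ^ (4 * k + 4) / ((4 * k + 4).factorial : ℂ)) := by
  have := (summable_gf l 0 x).comp_injective (i := fun k : ℕ => k + 1)
    (fun a b hab => by simpa using hab)
  apply this.congr
  intro k
  have h4 : 4 * (k + 1) + 0 = 4 * k + 4 := by ring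
  simp only [Function.comp, h4]

lemma hasDerivAt_gf_zero (l : ℂ) (x : ℝ) :
    HasDerivAt (gf l 0) (l * gf l 3 x) x := by
  set R : ℝ := |x| + 1 with hR
  have hxR : x ∈ ball (0:ℝ) R := by
    rw [mem_ball, Real.dist_eq, sub_zero]
    simp only [hR]; linarith
  have key : HasDerivAt
      (fun z : ℝ => ∑' k : ℕ, l ^ (k+1) * (z : ℂ) ^ (4 * k + 4) / ((4 * k + 4).factorial : ℂ))
      (∑' k : ℕ, l * (l ^ k * (x : ℂ) ^ (4 * k + 3) / ((4 * k + 3).factorial : ℂ))) x := by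
    apply hasDerivAt_tsum_of_isPreconnected
      (u := fun k : ℕ => ‖l‖ * (‖l‖ ^ k * R ^ (4 * k + 3) / ((4 * k + 3).factorial : ℝ)))
      ((summable_aux ‖l‖ R (norm_nonneg _) (by positivity) 3).mul_left ‖l‖)
      isOpen_ball ((convex_ball (0:ℝ) R).isPreconnected)
      (g' := fun k (y : ℝ) => l * (l ^ k * (y : ℂ) ^ (4 * k + 3) / ((4 * k + 3).factorial : ℂ)))
      ?_ ?_ hxR (summable_gf_shift l x) hxR
    · intro n y _
      have := hasDerivAt_term l (n+1) (4 * n + 3) y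
      convert this using 1
      · rfl
      ring
    · intro n y hy
      have hyR : |y| ≤ R := by
        have : |y| < R := by simpa [Real.dist_eq] using (mem_ball.1 hy)
        linarith
      rw [norm_mul, norm_term]
      apply mul_le_mul_of_nonneg_left ?_ (norm_nonneg l)
      rw [div_le_div_iff_of_pos_right (by exact_mod_cast (4*n+3).factorial_pos :
        (0:ℝ) < ((4*n+3).factorial : ℝ))]
      exact mul_le_mul_of_nonneg_left (pow_le_pow_left₀ (abs_nonneg _) hyR _) (by positivity)
  have hfun : gf l 0 = fun z : ℝ =>
      1 + ∑' k : ℕ, l ^ (k+1) * (z : ℂ) ^ (4 * k + 4) / ((4 * k + 4).factorial : ℂ) :=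
    funext (gf_zero_shift l)
  rw [hfun]
  have := key.const_add (1 : ℂ)
  convert this using 1
  · rfl
  rw [tsum_mul_left]
  rfl

lemma gf_at_zero_pos (l : ℂ) (j : ℕ) (hj : j ≠ 0) : gf l j 0 = 0 := by
  rw [gf]
  have : ∀ k : ℕ, l ^ k * ((0:ℝ) : ℂ) ^ (4 * k + j) / ((4 * k + j).factorial : ℂ) = 0 := by
    intro k
    rw [Complex.ofReal_zero, zero_pow (by omega)]
    simp
  rw [tsum_congr this, tsum_zero]

lemma gf_at_zero_zero (l : ℂ) : gf l 0 0 = 1 := by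
  rw [gf, tsum_eq_single 0]
  · simp
  · intro k hk
    rw [Complex.ofReal_zero, zero_pow (by omega)]
    simp

lemma gf_three_one (l : ℂ) :
    gf l 3 1 = ∑' k : ℕ, l ^ k / ((Nat.factorial (4 * k + 3) : ℕ) : ℂ) := by
  rw [gf]
  apply tsum_congr
  intro k
  simp

lemma differentiable_gf (l : ℂ) (j : ℕ) : Differentiable ℝ (gf l j) := by
  cases j with
  | zero => exact fun x => (hasDerivAt_gf_zero l x).differentiableAt
  | succ j => exact fun x => (hasDerivAt_gf_succ l j x).differentiableAt

lemma deriv_gf_succ (l : ℂ) (j : ℕ) : deriv (gf l (j+1)) = gf l j :=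
  funext fun x => (hasDerivAt_gf_succ l j x).deriv

lemma deriv_gf_zero (l : ℂ) : deriv (gf l 0) = fun x => l * gf l 3 x :=
  funext fun x => (hasDerivAt_gf_zero l x).deriv

lemma contDiff_gf (l : ℂ) (n : ℕ) : ∀ j, ContDiff ℝ (n : WithTop ℕ∞) (gf l j) := by
  induction n with
  | zero =>
    intro j
    simpa [contDiff_zero] using (differentiable_gf l j).continuous
  | succ n ih =>
    intro j
    have : ((n + 1 : ℕ) : WithTop ℕ∞) = (n : WithTop ℕ∞) + 1 := by push_cast; rfl
    rw [this, contDiff_succ_iff_deriv]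
    refine ⟨differentiable_gf l j, by simp, ?_⟩
    cases j with
    | zero => rw [deriv_gf_zero]; exact contDiff_const.mul (ih 3)
    | succ j => rw [deriv_gf_succ]; exact ih j

/-- The step lemma for computing `iteratedDerivWithin` on `[0,1]`. -/
lemma stepIDW {f : ℝ → ℂ} {g g' : ℝ → ℂ} {n : ℕ}
    (hg : ∀ x, HasDerivAt g (g' x) x)
    (h : ∀ x ∈ Icc (0:ℝ) 1, iteratedDerivWithin n f (Icc (0:ℝ) 1) x = g x) :
    ∀ x ∈ Icc (0:ℝ) 1, iteratedDerivWithin (n+1) f (Icc (0:ℝ) 1) x = g' x := by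
  intro x hx
  have hu := (uniqueDiffOn_Icc (zero_lt_one (α := ℝ))).uniqueDiffWithinAt hx
  rw [iteratedDerivWithin_succ, derivWithin_congr h (h x hx),
    ((hg x).hasDerivWithinAt).derivWithin hu]

/-- The vector field of the first order system. -/
def vf (l : ℂ) (z : Fin 4 → ℂ) : Fin 4 → ℂ := ![z 1, z 2, z 3, l * z 0]

lemma lipschitz_vf (l : ℂ) : LipschitzWith (1 ⊔ ‖l‖₊) (vf l) := by
  apply LipschitzWith.of_dist_le_mul
  intro z w
  have hK : ((1 ⊔ ‖l‖₊ : NNReal) : ℝ) = max 1 ‖l‖ := rfl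
  rw [hK]
  have hnn : (0:ℝ) ≤ max 1 ‖l‖ * dist z w := by positivity
  apply dist_pi_le_iff hnn |>.2
  intro i
  fin_cases i
  · calc dist (vf l z 0) (vf l w 0) = dist (z 1) (w 1) := rfl
      _ ≤ dist z w := dist_le_pi_dist z w 1
      _ ≤ max 1 ‖l‖ * dist z w := by nlinarith [dist_nonneg (x := z) (y := w), le_max_left (1:ℝ) ‖l‖]
  · calc dist (vf l z 1) (vf l w 1) = dist (z 2) (w 2) := rfl
      _ ≤ dist z w := dist_le_pi_dist z w 2
      _ ≤ max 1 ‖l‖ * dist z w := by nlinarith [dist_nonneg (x := z) (y := w), le_max_left (1:ℝ) ‖l‖]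
  · calc dist (vf l z 2) (vf l w 2) = dist (z 3) (w 3) := rfl
      _ ≤ dist z w := dist_le_pi_dist z w 3
      _ ≤ max 1 ‖l‖ * dist z w := by nlinarith [dist_nonneg (x := z) (y := w), le_max_left (1:ℝ) ‖l‖]
  · calc dist (vf l z 3) (vf l w 3) = ‖l‖ * dist (z 0) (w 0) := by
          simp [vf, dist_eq_norm, ← mul_sub, norm_mul]
      _ ≤ ‖l‖ * dist z w :=
          mul_le_mul_of_nonneg_left (dist_le_pi_dist z w 0) (norm_nonneg l)
      _ ≤ max 1 ‖l‖ * dist z w :=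
          mul_le_mul_of_nonneg_right (le_max_right _ _) dist_nonneg

/-- The vector solution built from the `gf` functions. -/
noncomputable def gv (l : ℂ) (t : ℝ) : Fin 4 → ℂ := ![gf l 3 t, gf l 2 t, gf l 1 t, gf l 0 t]

lemma hasDerivAt_gv (l : ℂ) (t : ℝ) : HasDerivAt (gv l) (vf l (gv l t)) t := by
  rw [hasDerivAt_pi]
  intro i
  fin_cases i
  · show HasDerivAt (fun t => gv l t 0) (vf l (gv l t) 0) t
    simp only [gv, vf, Matrix.cons_val_zero, Matrix.cons_val_one, Matrix.head_cons]
    exact hasDerivAt_gf_succ l 2 t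
  · show HasDerivAt (fun t => gv l t 1) (vf l (gv l t) 1) t
    simp only [gv, vf, Matrix.cons_val_one, Matrix.head_cons, Matrix.cons_val_two,
      Matrix.tail_cons]
    exact hasDerivAt_gf_succ l 1 t
  · show HasDerivAt (fun t => gv l t 2) (vf l (gv l t) 2) t
    simp only [gv, vf, Matrix.cons_val_two, Matrix.tail_cons, Matrix.head_cons,
      Matrix.cons_val_three]
    exact hasDerivAt_gf_succ l 0 t
  · show HasDerivAt (fun t => gv l t 3) (vf l (gv l t) 3) t
    simp only [gv, vf, Matrix.cons_val_three, Matrix.tail_cons, Matrix.head_cons,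
      Matrix.cons_val_zero]
    exact hasDerivAt_gf_zero l t

lemma vf_smul (l : ℂ) (c : ℂ) (z : Fin 4 → ℂ) : vf l (c • z) = c • vf l z := by
  funext i
  fin_cases i <;> simp [vf] <;> ring

end ModelProblem

open ModelProblem

/-- The boundary value problem `y'''' = λy` on `[0,1]`,
`y(0) = y'(0) = y''(0) = 0`, `y(1) = 0`, has a nonzero `C⁴` solution iff
`Σ_{k=0}^∞ λᵏ/(4k+3)! = 0`. -/
theorem model_problem_eigenvalue_iff (l : ℂ) :
    (∃ y : ℝ → ℂ,
      ContDiffOn ℝ 4 y (Set.Icc (0:ℝ) 1) ∧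
      (∀ x ∈ Set.Icc (0:ℝ) 1,
        iteratedDerivWithin 4 y (Set.Icc (0:ℝ) 1) x = l * y x) ∧
      y 0 = 0 ∧
      iteratedDerivWithin 1 y (Set.Icc (0:ℝ) 1) 0 = 0 ∧
      iteratedDerivWithin 2 y (Set.Icc (0:ℝ) 1) 0 = 0 ∧
      y 1 = 0 ∧
      (∃ x ∈ Set.Icc (0:ℝ) 1, y x ≠ 0)) ↔
    (∑' k : ℕ, l ^ k / ((Nat.factorial (4 * k + 3) : ℕ) : ℂ)) = 0 := by
  have hs : UniqueDiffOn ℝ (Set.Icc (0:ℝ) 1) := uniqueDiffOn_Icc zero_lt_one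
  constructor
  · rintro ⟨y, hy4, hode, h0, h1, h2, hb, x0, hx0, hy0⟩
    set s : Set ℝ := Set.Icc (0:ℝ) 1 with hsdef
    -- the vector function of iterated derivatives
    set F : ℝ → Fin 4 → ℂ :=
      fun t => ![y t, iteratedDerivWithin 1 y s t,
        iteratedDerivWithin 2 y s t, iteratedDerivWithin 3 y s t] with hF
    set c : ℂ := iteratedDerivWithin 3 y s 0 with hc
    set G : ℝ → Fin 4 → ℂ := fun t => c • gv l t with hG
    have hstep : ∀ i : ℕ, i < 4 → ∀ t ∈ s,
        HasDerivWithinAt (iteratedDerivWithin i y s) (iteratedDerivWithin (i+1) y s t) s t := by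
      intro i hi t ht
      have hdiff : DifferentiableOn ℝ (iteratedDerivWithin i y s) s :=
        hy4.differentiableOn_iteratedDerivWithin (by exact_mod_cast hi) hs
      have := (hdiff t ht).hasDerivWithinAt
      rwa [← iteratedDerivWithin_succ] at this
    have hF' : ∀ t ∈ Set.Ico (0:ℝ) 1, HasDerivWithinAt F (vf l (F t)) (Set.Ici t) t := by
      intro t ht
      have hts : t ∈ s := ⟨ht.1, ht.2.le⟩
      have hmem : s ∈ nhdsWithin t (Set.Ici t) := by
        apply Filter.mem_of_superset (Icc_mem_nhdsGE_of_mem ⟨le_refl t, ht.2⟩)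
        exact Set.Icc_subset_Icc ht.1 le_rfl
      apply HasDerivWithinAt.mono_of_mem_nhdsWithin ?_ hmem
      rw [hasDerivWithinAt_pi]
      intro i
      fin_cases i
      · show HasDerivWithinAt (fun t => F t 0) (vf l (F t) 0) s t
        simp only [hF, vf, Matrix.cons_val_zero, Matrix.cons_val_one, Matrix.head_cons]
        have := hstep 0 (by norm_num) t hts
        rwa [iteratedDerivWithin_zero] at this
      · show HasDerivWithinAt (fun t => F t 1) (vf l (F t) 1) s t
        simp only [hF, vf, Matrix.cons_val_one, Matrix.head_cons, Matrix.cons_val_two,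
          Matrix.tail_cons]
        exact hstep 1 (by norm_num) t hts
      · show HasDerivWithinAt (fun t => F t 2) (vf l (F t) 2) s t
        simp only [hF, vf, Matrix.cons_val_two, Matrix.tail_cons, Matrix.head_cons,
          Matrix.cons_val_three]
        exact hstep 2 (by norm_num) t hts
      · show HasDerivWithinAt (fun t => F t 3) (vf l (F t) 3) s t
        simp only [hF, vf, Matrix.cons_val_three, Matrix.tail_cons, Matrix.head_cons,
          Matrix.cons_val_zero]
        have := hstep 3 (by norm_num) t hts
        rwa [hode t hts] at this
    have hFc : ContinuousOn F s := by
      apply continuousOn_pi.2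
      intro i
      fin_cases i
      · show ContinuousOn (fun t => F t 0) s
        simp only [hF, Matrix.cons_val_zero]
        exact hy4.continuousOn
      · show ContinuousOn (fun t => F t 1) s
        simp only [hF, Matrix.cons_val_one, Matrix.head_cons]
        exact (hy4.differentiableOn_iteratedDerivWithin (by norm_num) hs).continuousOn
      · show ContinuousOn (fun t => F t 2) s
        simp only [hF, Matrix.cons_val_two, Matrix.tail_cons, Matrix.head_cons]
        exact (hy4.differentiableOn_iteratedDerivWithin (by norm_num) hs).continuousOn
      · show ContinuousOn (fun t => F t 3) s
        simp only [hF, Matrix.cons_val_three, Matrix.tail_cons, Matrix.head_cons]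
        exact (hy4.differentiableOn_iteratedDerivWithin (by norm_num) hs).continuousOn
    have hG' : ∀ t ∈ Set.Ico (0:ℝ) 1, HasDerivWithinAt G (vf l (G t)) (Set.Ici t) t := by
      intro t _
      have := ((hasDerivAt_gv l t).const_smul c).hasDerivWithinAt (s := Set.Ici t)
      rwa [← vf_smul] at this
    have hGc : ContinuousOn G s := by
      apply Continuous.continuousOn
      have hd : Differentiable ℝ (gv l) := fun t => (hasDerivAt_gv l t).differentiableAt
      exact hd.continuous.const_smul c
    have hinit : F 0 = G 0 := by
      funext i
      fin_cases i
      · show F 0 0 = G 0 0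
        simp [hF, hG, gv, h0, gf_at_zero_pos l 3 (by norm_num)]
      · show F 0 1 = G 0 1
        rw [iteratedDerivWithin_one] at h1
        simp [hF, hG, gv, h1, gf_at_zero_pos l 2 (by norm_num)]
      · show F 0 2 = G 0 2
        simp [hF, hG, gv, h2, gf_at_zero_pos l 1 (by norm_num)]
      · show F 0 3 = G 0 3
        simp [hF, hG, gv, gf_at_zero_zero l, hc]
    have heq : Set.EqOn F G s :=
      ODE_solution_unique (v := fun _ : ℝ => vf l) (fun _ => lipschitz_vf l) hFc hF' hGc hG' hinit
    have hc0 : c ≠ 0 := by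
      intro h
      have := congrFun (heq hx0) 0
      simp [hF, hG, h, gv] at this
      exact hy0 this
    have h1' := congrFun (heq (⟨zero_le_one, le_rfl⟩ : (1:ℝ) ∈ s)) 0
    simp only [hF, hG, Matrix.cons_val_zero, Pi.smul_apply, gv, smul_eq_mul, hb] at h1'
    rw [← gf_three_one l]
    have := h1'.symm
    rcases mul_eq_zero.1 this with h | h
    · exact absurd h hc0
    · exact h
  · intro htsum
    refine ⟨gf l 3, ?_, ?_, ?_, ?_, ?_, ?_, ?_⟩
    · have := (contDiff_gf l 4 3).contDiffOn (s := Set.Icc (0:ℝ) 1)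
      exact_mod_cast this
    · have base : ∀ x ∈ Set.Icc (0:ℝ) 1,
          iteratedDerivWithin 0 (gf l 3) (Set.Icc (0:ℝ) 1) x = gf l 3 x := by
        intro x _; rw [iteratedDerivWithin_zero]
      have d1 := stepIDW (hasDerivAt_gf_succ l 2) base
      have d2 := stepIDW (hasDerivAt_gf_succ l 1) d1
      have d3 := stepIDW (hasDerivAt_gf_succ l 0) d2
      have d4 := stepIDW (hasDerivAt_gf_zero l) d3
      exact d4
    · exact gf_at_zero_pos l 3 (by norm_num)
    · have base : ∀ x ∈ Set.Icc (0:ℝ) 1,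
          iteratedDerivWithin 0 (gf l 3) (Set.Icc (0:ℝ) 1) x = gf l 3 x := by
        intro x _; rw [iteratedDerivWithin_zero]
      have d1 := stepIDW (hasDerivAt_gf_succ l 2) base
      rw [d1 0 (by norm_num)]
      exact gf_at_zero_pos l 2 (by norm_num)
    · have base : ∀ x ∈ Set.Icc (0:ℝ) 1,
          iteratedDerivWithin 0 (gf l 3) (Set.Icc (0:ℝ) 1) x = gf l 3 x := by
        intro x _; rw [iteratedDerivWithin_zero]
      have d1 := stepIDW (hasDerivAt_gf_succ l 2) base
      have d2 := stepIDW (hasDerivAt_gf_succ l 1) d1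
      rw [d2 0 (by norm_num)]
      exact gf_at_zero_pos l 1 (by norm_num)
    · rw [gf_three_one l]; exact htsum
    · by_contra hnone
      push_neg at hnone
      have base : ∀ x ∈ Set.Icc (0:ℝ) 1,
          iteratedDerivWithin 0 (gf l 3) (Set.Icc (0:ℝ) 1) x = gf l 3 x := by
        intro x _; rw [iteratedDerivWithin_zero]
      have d1 := stepIDW (hasDerivAt_gf_succ l 2) base
      have d2 := stepIDW (hasDerivAt_gf_succ l 1) d1
      have d3 := stepIDW (hasDerivAt_gf_succ l 0) d2
      have base0 : ∀ x ∈ Set.Icc (0:ℝ) 1,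
          iteratedDerivWithin 0 (gf l 3) (Set.Icc (0:ℝ) 1) x = (fun _ => (0:ℂ)) x := by
        intro x hx; rw [iteratedDerivWithin_zero]; exact hnone x hx
      have z1 := stepIDW (g' := fun _ => (0:ℂ)) (fun x => hasDerivAt_const x 0) base0
      have z2 := stepIDW (g' := fun _ => (0:ℂ)) (fun x => hasDerivAt_const x 0) z1
      have z3 := stepIDW (g' := fun _ => (0:ℂ)) (fun x => hasDerivAt_const x 0) z2
      have e1 := d3 0 (by norm_num)
      have e2 := z3 0 (by norm_num)
      rw [e2] at e1
      rw [gf_at_zero_zero l] at e1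
      exact one_ne_zero e1.symm
end

section
/- For every complex number λ with |λ| ≤ 625, Σ_{k=0}^∞ λᵏ/(4k+3)! ≠ 0. Equivalently, sinh ρ ≠ sin ρ for every ρ ∈ ℂ with 0 < |ρ| ≤ 5. -/
open Complex

private lemma fac_lb1 : ∀ k : ℕ, 6 * 840 ^ k ≤ Nat.factorial (4 * k + 3) := by
  intro k
  induction k with
  | zero => norm_num [Nat.factorial]
  | succ k ih =>
    have h4 : 4 * (k + 1) + 3 = (4 * k + 3) + 4 := by ring
    rw [h4]
    have hexp : Nat.factorial ((4 * k + 3) + 4) =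
        ((4 * k + 7) * ((4 * k + 6) * ((4 * k + 5) * (4 * k + 4)))) *
          Nat.factorial (4 * k + 3) := by
      simp [Nat.factorial_succ]; ring
    rw [hexp]
    calc 6 * 840 ^ (k + 1) = 840 * (6 * 840 ^ k) := by ring
    _ ≤ ((4 * k + 7) * ((4 * k + 6) * ((4 * k + 5) * (4 * k + 4)))) *
        Nat.factorial (4 * k + 3) := by
        apply Nat.mul_le_mul _ ih
        calc 840 = 7*(6*(5*4)) := by norm_num
        _ ≤ (4 * k + 7) * ((4 * k + 6) * ((4 * k + 5) * (4 * k + 4))) := by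
            gcongr <;> omega

private lemma fac_lb2 : ∀ k : ℕ, 5040 * 7920 ^ k ≤ Nat.factorial (4 * k + 7) := by
  intro k
  induction k with
  | zero => norm_num [Nat.factorial]
  | succ k ih =>
    have h4 : 4 * (k + 1) + 7 = (4 * k + 7) + 4 := by ring
    rw [h4]
    have hexp : Nat.factorial ((4 * k + 7) + 4) =
        ((4 * k + 11) * ((4 * k + 10) * ((4 * k + 9) * (4 * k + 8)))) *
          Nat.factorial (4 * k + 7) := by
      simp [Nat.factorial_succ]; ring
    rw [hexp]
    calc 5040 * 7920 ^ (k + 1) = 7920 * (5040 * 7920 ^ k) := by ring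
    _ ≤ ((4 * k + 11) * ((4 * k + 10) * ((4 * k + 9) * (4 * k + 8)))) *
        Nat.factorial (4 * k + 7) := by
        apply Nat.mul_le_mul _ ih
        calc 7920 = 11*(10*(9*8)) := by norm_num
        _ ≤ (4 * k + 11) * ((4 * k + 10) * ((4 * k + 9) * (4 * k + 8))) := by
            gcongr <;> omega

private lemma h_ne_zero (l : ℂ) (hl : ‖l‖ ≤ 625) :
    (∑' k : ℕ, l ^ k / ((Nat.factorial (4 * k + 3) : ℕ) : ℂ)) ≠ 0 := by
  set f : ℕ → ℂ := fun k => l ^ k / ((Nat.factorial (4 * k + 3) : ℕ) : ℂ) with hf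
  have habs : ∀ k : ℕ, ‖f k‖ ≤ (625 : ℝ) ^ k / (Nat.factorial (4 * k + 3) : ℝ) := by
    intro k
    have hfacpos : (0 : ℝ) < (Nat.factorial (4 * k + 3) : ℝ) := by
      exact_mod_cast Nat.factorial_pos _
    simp only [hf, norm_div, norm_pow, Complex.norm_natCast]
    gcongr <;> first
      | exact norm_nonneg l
      | exact hl
  -- summability
  have hsum : Summable f := by
    apply Summable.of_norm_bounded (g := fun k => (1 / 6 : ℝ) * (625 / 840) ^ k)
    · exact (summable_geometric_of_lt_one (by norm_num) (by norm_num)).mul_left _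
    · intro k
      refine (habs k).trans ?_
      have h1 : (6 * 840 ^ k : ℝ) ≤ (Nat.factorial (4 * k + 3) : ℝ) := by
        exact_mod_cast fac_lb1 k
      have h2 : (0 : ℝ) < 6 * 840 ^ k := by positivity
      calc (625 : ℝ) ^ k / (Nat.factorial (4 * k + 3) : ℝ)
          ≤ (625 : ℝ) ^ k / (6 * 840 ^ k) := by gcongr
        _ = (1 / 6 : ℝ) * (625 / 840) ^ k := by
            rw [div_pow]; field_simp
  -- bound on the tail
  have htailbound : ∀ k : ℕ,
      ‖f (k + 1)‖ ≤ (625 / 5040 : ℝ) * (625 / 7920) ^ k := by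
    intro k
    refine (habs (k + 1)).trans ?_
    have h1 : (5040 * 7920 ^ k : ℝ) ≤ (Nat.factorial (4 * (k + 1) + 3) : ℝ) := by
      have : 4 * (k + 1) + 3 = 4 * k + 7 := by ring
      rw [this]; exact_mod_cast fac_lb2 k
    have h2 : (0 : ℝ) < 5040 * 7920 ^ k := by positivity
    calc (625 : ℝ) ^ (k + 1) / (Nat.factorial (4 * (k + 1) + 3) : ℝ)
        ≤ (625 : ℝ) ^ (k + 1) / (5040 * 7920 ^ k) := by gcongr
      _ = (625 / 5040 : ℝ) * (625 / 7920) ^ k := by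
          rw [div_pow, pow_succ]; field_simp
  have hgsum : Summable (fun k : ℕ => (625 / 5040 : ℝ) * (625 / 7920) ^ k) :=
    (summable_geometric_of_lt_one (by norm_num) (by norm_num)).mul_left _
  have hnormsum : Summable (fun k : ℕ => ‖f (k + 1)‖) := by
    apply Summable.of_nonneg_of_le (fun k => norm_nonneg _) _ hgsum
    intro k
    exact htailbound k
  have hT : ‖∑' k : ℕ, f (k + 1)‖ ≤ (625 / 5040 : ℝ) * (1 - 625 / 7920)⁻¹ := by
    calc ‖∑' k : ℕ, f (k + 1)‖ ≤ ∑' k : ℕ, ‖f (k + 1)‖ := norm_tsum_le_tsum_norm hnormsum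
      _ ≤ ∑' k : ℕ, (625 / 5040 : ℝ) * (625 / 7920) ^ k := by
          exact Summable.tsum_le_tsum (fun k => htailbound k) hnormsum hgsum
      _ = (625 / 5040 : ℝ) * (1 - 625 / 7920)⁻¹ := by
          rw [tsum_mul_left, tsum_geometric_of_lt_one (by norm_num) (by norm_num)]
  have hsplit : (∑' k : ℕ, f k) = f 0 + ∑' k : ℕ, f (k + 1) := Summable.tsum_eq_zero_add hsum
  have hf0 : f 0 = 1 / 6 := by
    simp only [hf]
    norm_num [Nat.factorial]
  intro hzero
  rw [hsplit, hf0] at hzero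
  have hTeq : (∑' k : ℕ, f (k + 1)) = -(1 / 6) := by linear_combination hzero
  rw [hTeq] at hT
  have : ‖(-(1 / 6) : ℂ)‖ = 1 / 6 := by
    rw [norm_neg]
    simp
  rw [this] at hT
  norm_num at hT

theorem sinh_sub_sin_hasSum (z : ℂ) :
    HasSum (fun k : ℕ => 2 * z ^ (4 * k + 3) / ((Nat.factorial (4 * k + 3) : ℕ) : ℂ))
      (Complex.sinh z - Complex.sin z) := by
  have hsin := Complex.hasSum_sin z
  have hsinh : HasSum (fun n : ℕ => z ^ (2 * n + 1) / ((Nat.factorial (2 * n + 1) : ℕ) : ℂ))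
      (Complex.sinh z) := by
    have h := Complex.hasSum_sin (z * Complex.I)
    rw [Complex.sin_mul_I] at h
    have h2 := h.div_const Complex.I
    rw [mul_div_cancel_right₀ _ Complex.I_ne_zero] at h2
    have key : ∀ n : ℕ, (-1 : ℂ) ^ n * (z * Complex.I) ^ (2 * n + 1) /
        ((Nat.factorial (2 * n + 1) : ℕ) : ℂ) / Complex.I =
        z ^ (2 * n + 1) / ((Nat.factorial (2 * n + 1) : ℕ) : ℂ) := by
      intro n
      have hI2 : (Complex.I) ^ (2 * n + 1) = (-1 : ℂ) ^ n * Complex.I := by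
        rw [pow_succ, pow_mul, Complex.I_sq]
      have hI : (z * Complex.I) ^ (2 * n + 1) =
          z ^ (2 * n + 1) * ((-1 : ℂ) ^ n * Complex.I) := by
        rw [mul_pow, hI2]
      have hsq : (-1 : ℂ) ^ n * (-1 : ℂ) ^ n = 1 := by
        rw [← pow_add, ← two_mul, pow_mul]; norm_num
      have hne : ((Nat.factorial (2 * n + 1) : ℕ) : ℂ) ≠ 0 := by
        exact_mod_cast Nat.factorial_ne_zero _
      have hII : Complex.I / Complex.I = 1 := div_self Complex.I_ne_zero
      rw [hI]
      calc (-1 : ℂ) ^ n * (z ^ (2 * n + 1) * ((-1 : ℂ) ^ n * Complex.I)) /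
            ((Nat.factorial (2 * n + 1) : ℕ) : ℂ) / Complex.I
          = ((-1 : ℂ) ^ n * (-1 : ℂ) ^ n) *
              (z ^ (2 * n + 1) / ((Nat.factorial (2 * n + 1) : ℕ) : ℂ)) *
              (Complex.I / Complex.I) := by ring
        _ = z ^ (2 * n + 1) / ((Nat.factorial (2 * n + 1) : ℕ) : ℂ) := by
            rw [hsq, hII]; ring
    simpa only [key] using h2
  have hdiff := hsinh.sub hsin
  set F : ℕ → ℂ := fun n =>
    z ^ (2 * n + 1) / ((Nat.factorial (2 * n + 1) : ℕ) : ℂ) -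
      (-1) ^ n * z ^ (2 * n + 1) / ((Nat.factorial (2 * n + 1) : ℕ) : ℂ) with hF
  have hinj : Function.Injective (fun k : ℕ => 2 * k + 1) := by
    intro a b h; simp only [] at h; omega
  have hvan : ∀ x ∉ Set.range (fun k : ℕ => 2 * k + 1), F x = 0 := by
    intro x hx
    have hev : Even x := by
      rcases Nat.even_or_odd x with h | h
      · exact h
      · rcases h with ⟨m, hm⟩
        exact absurd ⟨m, by simpa using hm.symm⟩ hx
    simp only [hF, hev.neg_one_pow, one_mul, sub_self]
  have := (Function.Injective.hasSum_iff hinj hvan).mpr hdiff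
  convert this using 2 with k
  simp only [Function.comp, hF]
  have hodd : Odd (2 * (2 * k + 1) + 1) := ⟨2 * k + 1, by ring⟩
  have h1 : ((-1 : ℂ)) ^ (2 * k + 1) = -1 := Odd.neg_one_pow ⟨k, by ring⟩
  have h2 : 2 * (2 * k + 1) + 1 = 4 * k + 3 := by ring
  rw [h1, h2]
  ring

/-- The entire function `h(λ) = Σ_{k=0}^∞ λᵏ/(4k+3)!` has no zeros in the
closed disk `|λ| ≤ 625`; equivalently, `sinh ρ ≠ sin ρ` for `0 < |ρ| ≤ 5`. -/
theorem char_fun_ne_zero_on_disk :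
    (∀ l : ℂ, ‖l‖ ≤ 625 →
      (∑' k : ℕ, l ^ k / ((Nat.factorial (4 * k + 3) : ℕ) : ℂ)) ≠ 0) ∧
    (∀ ρ : ℂ, 0 < ‖ρ‖ → ‖ρ‖ ≤ 5 → Complex.sinh ρ ≠ Complex.sin ρ) := by
  constructor
  · exact h_ne_zero
  · intro ρ hpos hle hcontra
    have hρ : ρ ≠ 0 := by
      intro h; rw [h] at hpos; simp at hpos
    have hS := sinh_sub_sin_hasSum ρ
    rw [hcontra, sub_self] at hS
    have hS2 := hS.div_const (2 * ρ ^ 3)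
    rw [zero_div] at hS2
    have heq : (fun k : ℕ => 2 * ρ ^ (4 * k + 3) / ((Nat.factorial (4 * k + 3) : ℕ) : ℂ) /
        (2 * ρ ^ 3)) = fun k : ℕ => (ρ ^ 4) ^ k / ((Nat.factorial (4 * k + 3) : ℕ) : ℂ) := by
      funext k
      have hne : ((Nat.factorial (4 * k + 3) : ℕ) : ℂ) ≠ 0 := by
        exact_mod_cast Nat.factorial_ne_zero _
      have hpow : ρ ^ (4 * k + 3) = (ρ ^ 4) ^ k * ρ ^ 3 := by
        rw [pow_add, pow_mul]
      rw [hpow]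
      field_simp
    rw [heq] at hS2
    have habs4 : ‖ρ ^ 4‖ ≤ 625 := by
      rw [norm_pow]
      calc ‖ρ‖ ^ 4 ≤ 5 ^ 4 := pow_le_pow_left₀ (norm_nonneg ρ) hle 4
        _ = 625 := by norm_num
    exact h_ne_zero (ρ ^ 4) habs4 hS2.tsum_eq
end

section
/- For every complex number ρ with |ρ| ≥ 5 and 0 ≤ arg ρ ≤ π/8, one has |sinh ρ| > |sin ρ|; consequently, every zero ρ of sinh ρ − sin ρ with |ρ| ≥ 5 and 0 ≤ arg ρ ≤ π/2 satisfies π/8 < arg ρ < 3π/8. -/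
open Complex Real

lemma key_ineq (x y : ℝ) (hx : 5/2 ≤ x) (hy : 0 ≤ y) (hxy : 2*y ≤ x) :
    ‖Complex.sin (x + y*I)‖ < ‖Complex.sinh (x + y*I)‖ := by
  have hsin : Complex.sin (x + y*I)
      = (Real.sin x * Real.cosh y : ℝ) + (Real.cos x * Real.sinh y : ℝ) * I := by
    rw [Complex.sin_add, Complex.cos_mul_I, Complex.sin_mul_I]
    push_cast
    ring
  have hsinh : Complex.sinh (x + y*I)
      = (Real.sinh x * Real.cos y : ℝ) + (Real.cosh x * Real.sin y : ℝ) * I := by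
    rw [Complex.sinh_add, Complex.cosh_mul_I, Complex.sinh_mul_I]
    push_cast
    ring
  have h1 : ‖Complex.sin (x + y*I)‖ ^ 2 = Real.sin x ^ 2 + Real.sinh y ^ 2 := by
    rw [Complex.sq_norm, hsin, Complex.normSq_add_mul_I]
    have := Real.cosh_sq y
    have := Real.sin_sq_add_cos_sq x
    nlinarith
  have h2 : ‖Complex.sinh (x + y*I)‖ ^ 2 = Real.sinh x ^ 2 + Real.sin y ^ 2 := by
    rw [Complex.sq_norm, hsinh, Complex.normSq_add_mul_I]
    have := Real.cosh_sq x
    have := Real.sin_sq_add_cos_sq y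
    nlinarith
  have hlt : ‖Complex.sin (x + y*I)‖ ^ 2 < ‖Complex.sinh (x + y*I)‖ ^ 2 := by
    rw [h1, h2]
    have hsy : Real.sinh y ≤ Real.sinh (x/2) := Real.sinh_le_sinh.2 (by linarith)
    have hdouble : Real.sinh x = 2 * Real.sinh (x/2) * Real.cosh (x/2) := by
      have := Real.sinh_two_mul (x/2)
      rw [show 2 * (x/2) = x by ring] at this
      linarith
    have hc1 : (1:ℝ) ≤ Real.cosh (x/2) := Real.one_le_cosh _
    have hxs : x ≤ Real.sinh x := Real.self_le_sinh_iff.2 (by linarith)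
    have hs1 : Real.sin x ≤ 1 := Real.sin_le_one x
    have hs2 : -1 ≤ Real.sin x := Real.neg_one_le_sin x
    have hy0 : 0 ≤ Real.sinh y := by simpa using Real.sinh_le_sinh.2 hy
    have hsy0 : 0 ≤ Real.sinh (x/2) := by simpa using Real.sinh_le_sinh.2 (by linarith : (0:ℝ) ≤ x/2)
    nlinarith [sq_nonneg (Real.sin y), sq_nonneg (Real.sinh (x/2)), sq_nonneg (Real.cosh (x/2) - 1)]
  have := norm_nonneg (Complex.sinh (x + y*I))
  nlinarith [norm_nonneg (Complex.sin (x + y*I))]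

lemma angle_bounds {θ : ℝ} (h0 : 0 ≤ θ) (h8 : θ ≤ Real.pi / 8) :
    7/8 ≤ Real.cos θ ∧ 2 * Real.sin θ ≤ Real.cos θ := by
  have hpi : Real.pi < 3.15 := by
    have := Real.pi_lt_d2
    linarith
  have hθ : θ ≤ 0.4 := by linarith
  have hc : 7/8 ≤ Real.cos θ := by
    have := Real.one_sub_sq_div_two_le_cos (x := θ)
    nlinarith
  refine ⟨hc, ?_⟩
  have hs : Real.sin θ ≤ θ := Real.sin_le h0
  nlinarith

/-- For `|ρ| ≥ 5` and `0 ≤ arg ρ ≤ π/8` one has `|sinh ρ| > |sin ρ|`;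
consequently every zero of `sinh ρ − sin ρ` with `|ρ| ≥ 5` and `0 ≤ arg ρ ≤ π/2`
satisfies `π/8 < arg ρ < 3π/8`. -/
theorem abs_sinh_gt_abs_sin_in_sector :
    (∀ ρ : ℂ, 5 ≤ ‖ρ‖ → 0 ≤ ρ.arg → ρ.arg ≤ Real.pi / 8 →
      ‖Complex.sin ρ‖ < ‖Complex.sinh ρ‖) ∧
    (∀ ρ : ℂ, 5 ≤ ‖ρ‖ → 0 ≤ ρ.arg → ρ.arg ≤ Real.pi / 2 →
      Complex.sinh ρ - Complex.sin ρ = 0 →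
      Real.pi / 8 < ρ.arg ∧ ρ.arg < 3 * Real.pi / 8) := by
  have part1 : ∀ ρ : ℂ, 5 ≤ ‖ρ‖ → 0 ≤ ρ.arg → ρ.arg ≤ Real.pi / 8 →
      ‖Complex.sin ρ‖ < ‖Complex.sinh ρ‖ := by
    intro ρ hr h0 h8
    obtain ⟨hc, hsc⟩ := angle_bounds h0 h8
    have hre : ρ.re = ‖ρ‖ * Real.cos ρ.arg := (Complex.norm_mul_cos_arg ρ).symm
    have him : ρ.im = ‖ρ‖ * Real.sin ρ.arg := (Complex.norm_mul_sin_arg ρ).symm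
    have hs0 : 0 ≤ Real.sin ρ.arg := Real.sin_nonneg_of_nonneg_of_le_pi h0 (by nlinarith [Real.pi_gt_three])
    have hx : 5/2 ≤ ρ.re := by nlinarith
    have hy : 0 ≤ ρ.im := by nlinarith
    have hxy : 2 * ρ.im ≤ ρ.re := by nlinarith
    have := key_ineq ρ.re ρ.im hx hy hxy
    rwa [Complex.re_add_im] at this
  refine ⟨part1, ?_⟩
  intro ρ hr h0 h2 hzero
  have heq : Complex.sinh ρ = Complex.sin ρ := by linear_combination hzero
  have habs : ‖Complex.sinh ρ‖ = ‖Complex.sin ρ‖ := by rw [heq]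
  constructor
  · by_contra h
    push_neg at h
    have := part1 ρ hr h0 h
    linarith
  · by_contra h
    push_neg at h
    -- arg ρ ≥ 3π/8; use symmetry via w = conj ρ * I = ρ.im + ρ.re * I
    set θ := ρ.arg with hθ
    have hφ0 : 0 ≤ Real.pi/2 - θ := by linarith
    have hφ8 : Real.pi/2 - θ ≤ Real.pi/8 := by linarith
    obtain ⟨hc, hsc⟩ := angle_bounds hφ0 hφ8
    rw [Real.cos_pi_div_two_sub] at hc hsc; rw [Real.sin_pi_div_two_sub] at hsc
    have hre : ρ.re = ‖ρ‖ * Real.cos θ := (Complex.norm_mul_cos_arg ρ).symm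
    have him : ρ.im = ‖ρ‖ * Real.sin θ := (Complex.norm_mul_sin_arg ρ).symm
    have hcos0 : 0 ≤ Real.cos θ := Real.cos_nonneg_of_mem_Icc ⟨by linarith [Real.pi_pos], h2⟩
    have hx : 5/2 ≤ ρ.im := by nlinarith
    have hy : 0 ≤ ρ.re := by nlinarith
    have hxy : 2 * ρ.re ≤ ρ.im := by nlinarith
    have hk := key_ineq ρ.im ρ.re hx hy hxy
    have hw : ((ρ.im : ℂ) + (ρ.re : ℂ) * I) = (starRingEnd ℂ) ρ * I := by
      apply Complex.ext <;> simp
    rw [hw] at hk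
    have hsinw : Complex.sin ((starRingEnd ℂ) ρ * I) = Complex.sinh ((starRingEnd ℂ) ρ) * I :=
      Complex.sin_mul_I _
    have hsinhw : Complex.sinh ((starRingEnd ℂ) ρ * I) = Complex.sin ((starRingEnd ℂ) ρ) * I :=
      Complex.sinh_mul_I _
    rw [hsinw, hsinhw, Complex.sinh_conj, Complex.sin_conj] at hk
    simp only [norm_mul, Complex.norm_conj, Complex.norm_I, mul_one] at hk
    linarith
end

section
/- Let ρ be a complex number with |ρ| ≥ 5 and π/8 ≤ arg ρ ≤ 3π/8, and suppose that |ρ − exp(iπ/4)·(√2·πn + π/(2√2))| ≥ 0.1 for every integer n. Then |exp(ρ) − i·exp(−iρ)| > 0.4. -/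
open Complex Real

set_option maxHeartbeats 1000000

/-- If `|ρ| ≥ 5`, `π/8 ≤ arg ρ ≤ 3π/8`, and `ρ` keeps distance at least
`0.1` from every point `exp(iπ/4)·(√2·πn + π/(2√2))`, `n ∈ ℤ`, then
`|exp ρ − i·exp(−iρ)| > 0.4`. -/
theorem abs_g_lower_bound (ρ : ℂ) (h5 : 5 ≤ norm ρ)
    (harg1 : Real.pi / 8 ≤ ρ.arg) (harg2 : ρ.arg ≤ 3 * Real.pi / 8)
    (hdist : ∀ n : ℤ, (0.1 : ℝ) ≤ norm (ρ - Complex.exp (Complex.I * Real.pi / 4) *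
      ((Real.sqrt 2 * Real.pi * (n : ℝ) + Real.pi / (2 * Real.sqrt 2) : ℝ) : ℂ))) :
    (0.4 : ℝ) < norm (Complex.exp ρ - Complex.I * Complex.exp (-Complex.I * ρ)) := by
  have hpi0 : (0:ℝ) < Real.pi := Real.pi_pos
  have hpi315 : Real.pi < 3.15 := by linarith [Real.pi_lt_d2]
  -- sqrt 2 facts
  have ha : Real.sqrt 2 * Real.sqrt 2 = 2 := Real.mul_self_sqrt (by norm_num)
  have hs2n : (0:ℝ) ≤ Real.sqrt 2 := Real.sqrt_nonneg 2
  have hs2lb : (1.414:ℝ) ≤ Real.sqrt 2 := by nlinarith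
  have hs2ub : Real.sqrt 2 ≤ 1.415 := by nlinarith
  -- lower bound on Im ρ
  have habs_sin := Complex.norm_mul_sin_arg ρ
  have hsin8 : (0.38:ℝ) ≤ Real.sin (Real.pi/8) := by
    rw [Real.sin_pi_div_eight]
    have hb : Real.sqrt (2 - Real.sqrt 2) * Real.sqrt (2 - Real.sqrt 2) = 2 - Real.sqrt 2 :=
      Real.mul_self_sqrt (by nlinarith)
    have hbn := Real.sqrt_nonneg (2 - Real.sqrt 2)
    nlinarith
  have hsm : Real.sin (Real.pi/8) ≤ Real.sin ρ.arg :=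
    Real.sin_le_sin_of_le_of_le_pi_div_two (by linarith) (by linarith) harg1
  have him19 : (1.9:ℝ) ≤ ρ.im := by nlinarith
  -- exp bound
  have hexpim : (6.65:ℝ) < Real.exp ρ.im := by
    have he1 := Real.exp_one_gt_d9
    have h1 : (0.9:ℝ) ≤ Real.exp (-0.1) := by nlinarith [Real.add_one_le_exp (-0.1:ℝ)]
    have h2 : Real.exp 1.9 = Real.exp 1 * Real.exp 1 * Real.exp (-0.1) := by
      rw [← Real.exp_add, ← Real.exp_add]; norm_num
    have h3 : (6.65:ℝ) < Real.exp 1.9 := by rw [h2]; nlinarith [Real.exp_pos (-0.1:ℝ)]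
    exact h3.trans_le (Real.exp_le_exp.2 him19)
  -- setup w and A
  set w : ℂ := (1 + Complex.I) * ρ with hw
  set A := norm (Complex.exp w - Complex.I) with hA
  have hAnn : (0:ℝ) ≤ A := norm_nonneg _
  have hfac : norm (Complex.exp ρ - Complex.I * Complex.exp (-Complex.I * ρ))
      = Real.exp ρ.im * A := by
    have h1 : Complex.exp ρ - Complex.I * Complex.exp (-Complex.I * ρ)
        = Complex.exp (-Complex.I * ρ) * (Complex.exp w - Complex.I) := by
      rw [hw, mul_sub, ← Complex.exp_add]
      have h : -Complex.I * ρ + (1 + Complex.I) * ρ = ρ := by ring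
      rw [h]; ring
    rw [h1, norm_mul, Complex.norm_exp]
    congr 2
    simp
  have hA2 : A^2 = (Real.exp w.re - 1)^2 + 2 * Real.exp w.re * (1 - Real.sin w.im) := by
    rw [hA, Complex.sq_norm, Complex.normSq_apply]
    have hre : (Complex.exp w - Complex.I).re = Real.exp w.re * Real.cos w.im := by
      simp [Complex.exp_re]
    have him : (Complex.exp w - Complex.I).im = Real.exp w.re * Real.sin w.im - 1 := by
      simp [Complex.exp_im]
    rw [hre, him]
    linear_combination (Real.exp w.re)^2 * Real.sin_sq_add_cos_sq w.im
  -- zeros avoidance in w coordinates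
  have hexp4 : Complex.exp (Complex.I * (Real.pi:ℂ) / 4) = ((Real.sqrt 2 / 2 : ℝ):ℂ) * (1 + Complex.I) := by
    have h : Complex.I * (Real.pi:ℂ) / 4 = ((Real.pi/4 : ℝ):ℂ) * Complex.I := by push_cast; ring
    rw [h, Complex.exp_mul_I, ← Complex.ofReal_cos, ← Complex.ofReal_sin,
        Real.cos_pi_div_four, Real.sin_pi_div_four]
    push_cast; ring
  have hr : ∀ n : ℤ, Real.sqrt 2 * (Real.sqrt 2 * Real.pi * (n:ℝ) + Real.pi / (2 * Real.sqrt 2))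
      = 2*Real.pi*(n:ℝ) + Real.pi/2 := by
    intro n
    have h0 : Real.sqrt 2 ≠ 0 := by positivity
    field_simp
    linear_combination (2*(n:ℝ)) * ha
  have hzero : ∀ n : ℤ, (0.0199:ℝ) ≤ w.re^2 + (w.im - (2*Real.pi*(n:ℝ) + Real.pi/2))^2 := by
    intro n
    have hd := hdist n
    have heq : w - Complex.I * (((2*Real.pi*(n:ℝ) + Real.pi/2 : ℝ)):ℂ)
        = (1 + Complex.I) * (ρ - Complex.exp (Complex.I * (Real.pi:ℂ) / 4) *
            ((Real.sqrt 2 * Real.pi * (n:ℝ) + Real.pi/(2*Real.sqrt 2) : ℝ):ℂ)) := by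
      rw [hexp4, hw,
        show ((2*Real.pi*(n:ℝ) + Real.pi/2 : ℝ):ℂ)
          = ((Real.sqrt 2:ℝ):ℂ) * ((Real.sqrt 2*Real.pi*(n:ℝ) + Real.pi/(2*Real.sqrt 2) : ℝ):ℂ) by
          rw [← Complex.ofReal_mul, hr n]]
      push_cast
      linear_combination ((Real.sqrt 2:ℝ):ℂ)/2 * (((Real.sqrt 2:ℝ):ℂ)*(Real.pi:ℂ)*(n:ℂ) + (Real.pi:ℂ)/(2*((Real.sqrt 2:ℝ):ℂ))) * Complex.I_sq
    have habs1I : norm (1 + Complex.I) = Real.sqrt 2 := by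
      simp [Complex.norm_def, Complex.normSq_apply]
      norm_num
    have h2 : (0.1414:ℝ) ≤ norm (w - Complex.I * (((2*Real.pi*(n:ℝ) + Real.pi/2 : ℝ)):ℂ)) := by
      rw [heq, norm_mul, habs1I]
      calc (0.1414:ℝ) = 1.414 * 0.1 := by norm_num
        _ ≤ Real.sqrt 2 * norm (ρ - Complex.exp (Complex.I * (Real.pi:ℂ) / 4) *
            ((Real.sqrt 2 * Real.pi * (n:ℝ) + Real.pi/(2*Real.sqrt 2) : ℝ):ℂ)) :=
          mul_le_mul hs2lb hd (by norm_num) hs2n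
    have h3 := Complex.sq_norm (w - Complex.I * (((2*Real.pi*(n:ℝ) + Real.pi/2 : ℝ)):ℂ))
    have hre2 : (w - Complex.I * (((2*Real.pi*(n:ℝ) + Real.pi/2 : ℝ)):ℂ)).re = w.re := by simp
    have him2 : (w - Complex.I * (((2*Real.pi*(n:ℝ) + Real.pi/2 : ℝ)):ℂ)).im
        = w.im - (2*Real.pi*(n:ℝ) + Real.pi/2) := by simp
    rw [Complex.normSq_apply, hre2, him2] at h3
    nlinarith [h2, h3]
  -- lower bound on A
  have hAc : (0.0605:ℝ) ≤ A := by
    rcases le_or_gt 0.08 w.re with hx | hx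
    · -- right case
      have ht : norm (Complex.exp w) ≤ A + 1 := by
        calc norm (Complex.exp w)
            = norm ((Complex.exp w - Complex.I) + Complex.I) := by
              rw [sub_add_cancel]
          _ ≤ A + norm Complex.I := norm_add_le _ _
          _ = A + 1 := by rw [Complex.norm_I]
      rw [Complex.norm_exp] at ht
      have h1 : (1.08:ℝ) ≤ Real.exp w.re := by
        have h2 := Real.add_one_le_exp (0.08:ℝ)
        have h3 := Real.exp_le_exp.2 hx
        linarith
      linarith
    rcases le_or_gt w.re (-0.08) with hx2 | hx2
    · -- left case
      have ht : (1:ℝ) ≤ A + norm (Complex.exp w) := by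
        have h2 : norm (Complex.I - Complex.exp w) = A := by
          rw [hA, norm_sub_rev]
        calc (1:ℝ) = norm Complex.I := Complex.norm_I.symm
          _ = norm ((Complex.I - Complex.exp w) + Complex.exp w) := by
              rw [sub_add_cancel]
          _ ≤ norm (Complex.I - Complex.exp w) + norm (Complex.exp w) :=
              norm_add_le _ _
          _ = A + norm (Complex.exp w) := by rw [h2]
      rw [Complex.norm_exp] at ht
      have h08 : Real.exp w.re ≤ Real.exp (-0.08) := Real.exp_le_exp.2 hx2
      have h09 : Real.exp (-0.08) ≤ 0.926 := by
        have h1 : (1.08:ℝ) ≤ Real.exp 0.08 := by linarith [Real.add_one_le_exp (0.08:ℝ)]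
        have h2 : Real.exp (-0.08) * Real.exp 0.08 = 1 := by rw [← Real.exp_add]; norm_num
        nlinarith [Real.exp_pos (-0.08:ℝ)]
      linarith
    · -- central case
      set n : ℤ := round ((w.im - Real.pi/2) / (2*Real.pi)) with hn
      set s : ℝ := w.im - Real.pi/2 - 2*Real.pi*(n:ℝ) with hs
      have hrnd := abs_sub_round ((w.im - Real.pi/2) / (2*Real.pi))
      have hq : s = ((w.im - Real.pi/2)/(2*Real.pi) - (n:ℝ)) * (2*Real.pi) := by
        rw [hs]; field_simp
      have hspi : |s| ≤ Real.pi := by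
        rw [hq, abs_mul, abs_of_pos (by positivity : (0:ℝ) < 2*Real.pi)]
        nlinarith [abs_nonneg ((w.im - Real.pi/2)/(2*Real.pi) - (n:ℝ))]
      have hz := hzero n
      have hssq : (0.0135:ℝ) ≤ s^2 := by
        have he : w.im - (2*Real.pi*(n:ℝ) + Real.pi/2) = s := by rw [hs]; ring
        rw [he] at hz
        nlinarith
      have hsin : Real.sin w.im = Real.cos s := by
        have h1 : w.im = (s + Real.pi/2) + (n:ℝ) * (2*Real.pi) := by rw [hs]; ring
        rw [h1, Real.sin_add_int_mul_two_pi, Real.sin_add_pi_div_two]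
      have hcos : Real.cos s ≤ 1 - 0.00272 := by
        have hb := Real.cos_le_one_sub_mul_cos_sq hspi
        have hpos2 : (0:ℝ) < Real.pi^2 := by positivity
        have h4 : (0.00272:ℝ) ≤ 2/Real.pi^2 * s^2 := by
          rw [div_mul_eq_mul_div, le_div_iff₀ hpos2]
          nlinarith
        linarith
      have hew : (0.92:ℝ) ≤ Real.exp w.re := by
        have h1 := Real.add_one_le_exp (-0.08:ℝ)
        have h2 := Real.exp_le_exp.2 (le_of_lt hx2)
        linarith
      have hA2lb : (0.005:ℝ) ≤ A^2 := by
        nlinarith [sq_nonneg (Real.exp w.re - 1), hA2, hsin, hcos, hew]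
      nlinarith [hA2lb, hAnn]
  rw [hfac]
  nlinarith [hexpim, hAc, Real.exp_pos ρ.im]
end

section
/- For each integer n ≥ 1, the function f(ρ) = sinh ρ − sin ρ has exactly one zero, counted with multiplicity (in particular this zero is simple), in the open disk {ρ : |ρ − exp(iπ/4)·(√2·πn + π/(2√2))| < 0.1}. Moreover, every zero of f with |ρ| > 5 and π/8 < arg ρ < 3π/8 lies in one of these disks. -/
open Complex Real


noncomputable def nuf (ρ : ℂ) : ℂ :=
  Complex.exp ((Complex.I - 1) * ρ) - Complex.I * Complex.exp (2 * Complex.I * ρ)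

lemma key_identity (ρ : ℂ) :
    2 * Complex.exp ρ * Complex.exp (Complex.I * ρ) * (Complex.sinh ρ - Complex.sin ρ) =
      Complex.exp ρ * (Complex.exp ((1 + Complex.I) * ρ) - (Complex.I + nuf ρ)) := by
  have hA : Complex.exp ρ ≠ 0 := Complex.exp_ne_zero ρ
  have hB : Complex.exp (Complex.I * ρ) ≠ 0 := Complex.exp_ne_zero _
  have e1 : Complex.exp ((1 + Complex.I) * ρ) = Complex.exp ρ * Complex.exp (Complex.I * ρ) := by
    rw [← Complex.exp_add]; ring_nf
  have e2 : Complex.exp ((Complex.I - 1) * ρ) = Complex.exp (Complex.I * ρ) * (Complex.exp ρ)⁻¹ := by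
    rw [← Complex.exp_neg, ← Complex.exp_add]; ring_nf
  have e3 : Complex.exp (2 * Complex.I * ρ) = Complex.exp (Complex.I * ρ) * Complex.exp (Complex.I * ρ) := by
    rw [← Complex.exp_add]; ring_nf
  have e4 : Complex.exp (-ρ) = (Complex.exp ρ)⁻¹ := Complex.exp_neg ρ
  have e5 : Complex.exp (-ρ * Complex.I) = (Complex.exp (Complex.I * ρ))⁻¹ := by
    rw [show -ρ * Complex.I = -(Complex.I * ρ) by ring, Complex.exp_neg]
  have e6 : Complex.exp (ρ * Complex.I) = Complex.exp (Complex.I * ρ) := by rw [mul_comm]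
  rw [Complex.sinh, Complex.sin, nuf, e1, e2, e3, e4, e5, e6]
  field_simp
  ring

lemma zero_iff (ρ : ℂ) :
    Complex.sinh ρ - Complex.sin ρ = 0 ↔
      Complex.exp ((1 + Complex.I) * ρ) = Complex.I + nuf ρ := by
  have h := key_identity ρ
  have hA : Complex.exp ρ ≠ 0 := Complex.exp_ne_zero ρ
  have hB : Complex.exp (Complex.I * ρ) ≠ 0 := Complex.exp_ne_zero _
  constructor
  · intro h0
    rw [h0, mul_zero] at h
    have := (mul_eq_zero.mp h.symm).resolve_left hA
    exact sub_eq_zero.mp this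
  · intro h0
    rw [h0, sub_self, mul_zero] at h
    rcases mul_eq_zero.mp h with h3 | h3
    · exact absurd h3 (mul_ne_zero (mul_ne_zero two_ne_zero hA) hB)
    · exact h3

noncomputable def ctr (r : ℝ) : ℂ :=
  Complex.exp (Complex.I * Real.pi / 4) *
    ((Real.sqrt 2 * Real.pi * r + Real.pi / (2 * Real.sqrt 2) : ℝ) : ℂ)

lemma ctr_eq (r : ℝ) : ctr r = ((Real.pi * r + Real.pi / 4 : ℝ) : ℂ) * (1 + Complex.I) := by
  have hs2 : Real.sqrt 2 > 0 := by positivity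
  have hsq : Real.sqrt 2 * Real.sqrt 2 = 2 := Real.mul_self_sqrt (by norm_num)
  have hre : Real.sqrt 2 / 2 * (Real.sqrt 2 * Real.pi * r + Real.pi / (2 * Real.sqrt 2)) =
      Real.pi * r + Real.pi / 4 := by
    field_simp
    linear_combination (8 * r) * hsq
  have hexp : Complex.exp (Complex.I * Real.pi / 4) =
      ((Real.sqrt 2 / 2 : ℝ) : ℂ) * (1 + Complex.I) := by
    have : Complex.I * Real.pi / 4 = ((Real.pi / 4 : ℝ) : ℂ) * Complex.I := by
      push_cast; ring
    rw [this, Complex.exp_mul_I, ← Complex.ofReal_cos, ← Complex.ofReal_sin,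
      Real.cos_pi_div_four, Real.sin_pi_div_four]
    push_cast; ring
  rw [ctr, hexp, ← hre]
  push_cast; ring

lemma ctr_re (r : ℝ) : (ctr r).re = Real.pi * r + Real.pi / 4 := by
  rw [ctr_eq]; simp

lemma ctr_im (r : ℝ) : (ctr r).im = Real.pi * r + Real.pi / 4 := by
  rw [ctr_eq]; simp

lemma exp_ctr (k : ℤ) : Complex.exp ((1 + Complex.I) * ctr k) = Complex.I := by
  have h1 : (1 + Complex.I) * ctr k = (k : ℂ) * (2 * (Real.pi : ℂ) * Complex.I) +
      ((Real.pi / 2 : ℝ) : ℂ) * Complex.I := by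
    rw [ctr_eq]
    have : Complex.I * Complex.I = -1 := Complex.I_mul_I
    push_cast
    ring_nf
    rw [Complex.I_sq]
    ring
  rw [h1, Complex.exp_add, Complex.exp_int_mul_two_pi_mul_I, one_mul,
    Complex.exp_mul_I, ← Complex.ofReal_cos, ← Complex.ofReal_sin,
    Real.cos_pi_div_two, Real.sin_pi_div_two]
  simp


lemma re_Im1 (ρ : ℂ) : ((Complex.I - 1) * ρ).re = -ρ.re - ρ.im := by
  simp [Complex.mul_re]

lemma re_2I (ρ : ℂ) : (2 * Complex.I * ρ).re = -2 * ρ.im := by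
  simp [Complex.mul_re]

lemma abs_Im1 : ‖Complex.I - 1‖ = Real.sqrt 2 := by
  rw [Complex.norm_def, Complex.normSq_apply]
  norm_num

lemma nuf_bound {ρ : ℂ} {m : ℝ} (hre : m ≤ ρ.re) (him : m ≤ ρ.im) :
    ‖nuf ρ‖ ≤ 2 * Real.exp (-(2 * m)) := by
  have h1 : ‖Complex.exp ((Complex.I - 1) * ρ)‖ ≤ Real.exp (-(2 * m)) := by
    rw [Complex.norm_exp, re_Im1]
    exact Real.exp_le_exp.mpr (by linarith)
  have h2 : ‖Complex.exp (2 * Complex.I * ρ)‖ ≤ Real.exp (-(2 * m)) := by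
    rw [Complex.norm_exp, re_2I]
    exact Real.exp_le_exp.mpr (by linarith)
  calc ‖nuf ρ‖ ≤ ‖Complex.exp ((Complex.I - 1) * ρ)‖ +
      ‖Complex.I * Complex.exp (2 * Complex.I * ρ)‖ := norm_sub_le _ _
    _ ≤ Real.exp (-(2 * m)) + Real.exp (-(2 * m)) := by
        rw [norm_mul, Complex.norm_I, one_mul]; exact add_le_add h1 h2
    _ = 2 * Real.exp (-(2 * m)) := by ring

lemma nuf_lip {ρ₁ ρ₂ : ℂ} {m : ℝ} (hre : m ≤ ρ₂.re) (him : m ≤ ρ₂.im)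
    (hd : ‖ρ₁ - ρ₂‖ ≤ (0.2 : ℝ)) :
    ‖nuf ρ₁ - nuf ρ₂‖ ≤ 7 * Real.exp (-(2 * m)) * ‖ρ₁ - ρ₂‖ := by
  set Δ := ρ₁ - ρ₂ with hΔ
  have key : nuf ρ₁ - nuf ρ₂ =
      Complex.exp ((Complex.I - 1) * ρ₂) * (Complex.exp ((Complex.I - 1) * Δ) - 1) -
      Complex.I * Complex.exp (2 * Complex.I * ρ₂) * (Complex.exp (2 * Complex.I * Δ) - 1) := by
    have f1 : Complex.exp ((Complex.I - 1) * ρ₁) =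
        Complex.exp ((Complex.I - 1) * ρ₂) * Complex.exp ((Complex.I - 1) * Δ) := by
      rw [← Complex.exp_add]; congr 1; rw [hΔ]; ring
    have f2 : Complex.exp (2 * Complex.I * ρ₁) =
        Complex.exp (2 * Complex.I * ρ₂) * Complex.exp (2 * Complex.I * Δ) := by
      rw [← Complex.exp_add]; congr 1; rw [hΔ]; ring
    rw [nuf, nuf, f1, f2]; ring
  have hs2 : Real.sqrt 2 ≤ 1.5 := by
    rw [show (1.5 : ℝ) = Real.sqrt (1.5 ^ 2) by rw [Real.sqrt_sq]; norm_num]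
    exact Real.sqrt_le_sqrt (by norm_num)
  have hb1 : ‖Complex.exp ((Complex.I - 1) * ρ₂)‖ ≤ Real.exp (-(2 * m)) := by
    rw [Complex.norm_exp, re_Im1]
    exact Real.exp_le_exp.mpr (by linarith)
  have hb2 : ‖Complex.exp (2 * Complex.I * ρ₂)‖ ≤ Real.exp (-(2 * m)) := by
    rw [Complex.norm_exp, re_2I]
    exact Real.exp_le_exp.mpr (by linarith)
  have hn1 : ‖(Complex.I - 1) * Δ‖ = Real.sqrt 2 * ‖Δ‖ := by
    rw [norm_mul, abs_Im1]
  have hn2 : ‖2 * Complex.I * Δ‖ = 2 * ‖Δ‖ := by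
    rw [norm_mul, norm_mul, Complex.norm_I]; simp
  have hΔ0 : 0 ≤ ‖Δ‖ := norm_nonneg _
  have he1 : ‖Complex.exp ((Complex.I - 1) * Δ) - 1‖ ≤ 2 * (Real.sqrt 2 * ‖Δ‖) := by
    have h := Complex.norm_exp_sub_one_le (x := (Complex.I - 1) * Δ)
      (by rw [hn1]; nlinarith)
    rw [hn1] at h
    simpa using h
  have he2 : ‖Complex.exp (2 * Complex.I * Δ) - 1‖ ≤ 2 * (2 * ‖Δ‖) := by
    have h := Complex.norm_exp_sub_one_le (x := 2 * Complex.I * Δ)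
      (by rw [hn2]; nlinarith)
    rw [hn2] at h
    simpa using h
  have hexp0 : 0 ≤ Real.exp (-(2 * m)) := (Real.exp_pos _).le
  calc ‖nuf ρ₁ - nuf ρ₂‖
      ≤ ‖Complex.exp ((Complex.I - 1) * ρ₂) * (Complex.exp ((Complex.I - 1) * Δ) - 1)‖ +
        ‖Complex.I * Complex.exp (2 * Complex.I * ρ₂) * (Complex.exp (2 * Complex.I * Δ) - 1)‖ := by
        rw [key]; exact norm_sub_le _ _
    _ ≤ Real.exp (-(2 * m)) * (2 * (Real.sqrt 2 * ‖Δ‖)) +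
        Real.exp (-(2 * m)) * (2 * (2 * ‖Δ‖)) := by
        rw [norm_mul, norm_mul, norm_mul, Complex.norm_I, one_mul]
        exact add_le_add (mul_le_mul hb1 he1 (norm_nonneg _) hexp0)
          (mul_le_mul hb2 he2 (norm_nonneg _) hexp0)
    _ ≤ 7 * Real.exp (-(2 * m)) * ‖Δ‖ := by nlinarith [mul_le_mul_of_nonneg_left hs2 (mul_nonneg hexp0 hΔ0)]


noncomputable def Tmap (c ρ : ℂ) : ℂ :=
  ρ - (Complex.exp ((1 + Complex.I) * ρ) - Complex.I - nuf ρ) / ((1 + Complex.I) * Complex.I)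

lemma abs_1I : ‖1 + Complex.I‖ = Real.sqrt 2 := by
  rw [Complex.norm_def, Complex.normSq_apply]
  norm_num

lemma hI1_ne : (1 + Complex.I) ≠ 0 := by
  intro h
  have := congrArg Complex.im h
  simp at this

lemma sqrt2_lt : Real.sqrt 2 < 1.415 := by
  rw [show (1.415:ℝ) = Real.sqrt (1.415^2) by rw [Real.sqrt_sq]; norm_num]
  exact Real.sqrt_lt_sqrt (by norm_num) (by norm_num)

lemma sqrt2_gt : 1.414 < Real.sqrt 2 := by
  rw [show (1.414:ℝ) = Real.sqrt (1.414^2) by rw [Real.sqrt_sq]; norm_num]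
  exact Real.sqrt_lt_sqrt (by positivity) (by norm_num)

-- identity for the difference of Tmap, given exp facts
lemma Tmap_diff (c ρ₁ ρ₂ : ℂ)
    (hE2 : Complex.exp ((1 + Complex.I) * ρ₂) =
      Complex.I * Complex.exp ((1 + Complex.I) * (ρ₂ - c)))
    (hE1 : Complex.exp ((1 + Complex.I) * ρ₁) =
      Complex.exp ((1 + Complex.I) * ρ₂) * Complex.exp ((1 + Complex.I) * (ρ₁ - ρ₂))) :
    Tmap c ρ₁ - Tmap c ρ₂ =
      ((ρ₁ - ρ₂) - (Complex.exp ((1 + Complex.I) * (ρ₁ - ρ₂)) - 1) / (1 + Complex.I))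
      - (Complex.exp ((1 + Complex.I) * (ρ₂ - c)) - 1) *
          (Complex.exp ((1 + Complex.I) * (ρ₁ - ρ₂)) - 1) / (1 + Complex.I)
      + (nuf ρ₁ - nuf ρ₂) / ((1 + Complex.I) * Complex.I) := by
  rw [Tmap, Tmap, hE1, hE2]
  field_simp [Complex.I_ne_zero, hI1_ne]
  ring

lemma exp76 : Real.exp (-(7.6:ℝ)) ≤ 1/1000 := by
  have h1 : Real.exp 7.6 = Real.exp 1 ^ 7 * Real.exp 0.6 := by
    rw [← Real.exp_nat_mul, ← Real.exp_add]; norm_num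
  have h2 : (2.7182818:ℝ) ≤ Real.exp 1 := by
    have := Real.exp_one_gt_d9; linarith
  have h3 : (1.6:ℝ) ≤ Real.exp 0.6 := by
    have := Real.add_one_le_exp (0.6:ℝ); linarith
  have h4 : (2.7182818:ℝ)^7 ≤ Real.exp 1 ^ 7 := by
    exact pow_le_pow_left₀ (by norm_num) h2 7
  have h5 : (1000:ℝ) ≤ Real.exp 7.6 := by rw [h1]; nlinarith [Real.exp_pos (0.6:ℝ)]
  rw [Real.exp_neg, show (1/1000:ℝ) = 1000⁻¹ by norm_num]
  exact inv_anti₀ (by norm_num) h5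

lemma exp_ctr_nat (n : ℕ) : Complex.exp ((1 + Complex.I) * ctr n) = Complex.I := by
  have h := exp_ctr (n : ℤ)
  simpa using h

lemma mem_bounds {n : ℕ} (hn : 1 ≤ n) {ρ : ℂ} (hρ : ρ ∈ Metric.closedBall (ctr n) 0.1) :
    3.8 ≤ ρ.re ∧ 3.8 ≤ ρ.im := by
  have hd : ‖ρ - ctr n‖ ≤ 0.1 := by
    rwa [Metric.mem_closedBall, Complex.dist_eq] at hρ
  have hre := (Complex.abs_re_le_norm (ρ - ctr n)).trans hd
  have him := (Complex.abs_im_le_norm (ρ - ctr n)).trans hd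
  rw [Complex.sub_re, ctr_re, abs_le] at hre
  rw [Complex.sub_im, ctr_im, abs_le] at him
  have hπ : (3.141592:ℝ) < Real.pi := Real.pi_gt_d6
  have hn1 : (1:ℝ) ≤ (n:ℝ) := by exact_mod_cast hn
  constructor <;> nlinarith [hre.1, him.1, Real.pi_pos]

lemma nuf_small {n : ℕ} (hn : 1 ≤ n) {ρ : ℂ} (hρ : ρ ∈ Metric.closedBall (ctr n) 0.1) :
    ‖nuf ρ‖ ≤ 0.002 := by
  obtain ⟨h1, h2⟩ := mem_bounds hn hρ
  have := nuf_bound h1 h2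
  have h76 : -(2 * (3.8:ℝ)) = -(7.6:ℝ) := by norm_num
  rw [h76] at this
  linarith [exp76]

lemma Tmap_lip {n : ℕ} (hn : 1 ≤ n) {ρ₁ ρ₂ : ℂ}
    (h1 : ρ₁ ∈ Metric.closedBall (ctr n) 0.1) (h2 : ρ₂ ∈ Metric.closedBall (ctr n) 0.1) :
    ‖Tmap (ctr n) ρ₁ - Tmap (ctr n) ρ₂‖ ≤ 0.9 * ‖ρ₁ - ρ₂‖ := by
  set Δ := ρ₁ - ρ₂ with hΔdef
  set w₂ := ρ₂ - ctr n with hw2def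
  -- exp facts
  have hE2 : Complex.exp ((1 + Complex.I) * ρ₂) =
      Complex.I * Complex.exp ((1 + Complex.I) * w₂) := by
    have harg : (1 + Complex.I) * ρ₂ = (1 + Complex.I) * ctr n + (1 + Complex.I) * w₂ := by
      rw [hw2def]; ring
    rw [harg, Complex.exp_add, exp_ctr_nat]
  have hE1 : Complex.exp ((1 + Complex.I) * ρ₁) =
      Complex.exp ((1 + Complex.I) * ρ₂) * Complex.exp ((1 + Complex.I) * Δ) := by
    rw [← Complex.exp_add]; congr 1; rw [hΔdef]; ring
  have key := Tmap_diff (ctr n) ρ₁ ρ₂ hE2 hE1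
  -- norm facts
  have hΔ02 : ‖Δ‖ ≤ 0.2 := by
    rw [hΔdef, ← dist_eq_norm]
    calc dist ρ₁ ρ₂ ≤ dist ρ₁ (ctr n) + dist (ctr n) ρ₂ := dist_triangle _ _ _
      _ ≤ 0.1 + 0.1 := by
          rw [dist_comm (ctr n) ρ₂]
          exact add_le_add (Metric.mem_closedBall.mp h1) (Metric.mem_closedBall.mp h2)
      _ = 0.2 := by norm_num
  have hw01 : ‖w₂‖ ≤ 0.1 := by
    rw [hw2def, ← dist_eq_norm]; exact Metric.mem_closedBall.mp h2
  have hΔ0 : (0:ℝ) ≤ ‖Δ‖ := norm_nonneg _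
  have hs2l : Real.sqrt 2 < 1.415 := sqrt2_lt
  have hs2g : 1.414 < Real.sqrt 2 := sqrt2_gt
  have hsq : Real.sqrt 2 * Real.sqrt 2 = 2 := Real.mul_self_sqrt (by norm_num)
  have hnD : ‖(1 + Complex.I) * Δ‖ = Real.sqrt 2 * ‖Δ‖ := by
    rw [norm_mul, abs_1I]
  have hnW : ‖(1 + Complex.I) * w₂‖ = Real.sqrt 2 * ‖w₂‖ := by
    rw [norm_mul, abs_1I]
  have hD1le : ‖(1 + Complex.I) * Δ‖ ≤ 1 := by
    rw [hnD]; nlinarith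
  have hW1le : ‖(1 + Complex.I) * w₂‖ ≤ 1 := by
    rw [hnW]; nlinarith [norm_nonneg w₂]
  have hD1 : ‖Complex.exp ((1 + Complex.I) * Δ) - 1‖ ≤ 2 * (Real.sqrt 2 * ‖Δ‖) := by
    have h := Complex.norm_exp_sub_one_le hD1le
    rw [hnD] at h
    exact h
  have hW1 : ‖Complex.exp ((1 + Complex.I) * w₂) - 1‖ ≤ 2 * (Real.sqrt 2 * ‖w₂‖) := by
    have h := Complex.norm_exp_sub_one_le hW1le
    rw [hnW] at h
    exact h
  have hD2 : ‖Complex.exp ((1 + Complex.I) * Δ) - 1 - (1 + Complex.I) * Δ‖ ≤ 2 * ‖Δ‖^2 := by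
    have h := Complex.norm_exp_sub_one_sub_id_le hD1le
    rw [hnD] at h
    calc ‖Complex.exp ((1 + Complex.I) * Δ) - 1 - (1 + Complex.I) * Δ‖
        ≤ (Real.sqrt 2 * ‖Δ‖)^2 := h
      _ = 2 * ‖Δ‖^2 := by nlinarith
  have hnu : ‖nuf ρ₁ - nuf ρ₂‖ ≤ 0.007 * ‖Δ‖ := by
    obtain ⟨hr2, hi2⟩ := mem_bounds hn h2
    have h := nuf_lip hr2 hi2 hΔ02
    have h76 : -(2 * (3.8:ℝ)) = -(7.6:ℝ) := by norm_num
    rw [h76] at h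
    nlinarith [exp76, Real.exp_pos (-(7.6:ℝ))]
  -- three pieces
  have habs1I : ‖(1 + Complex.I : ℂ)‖ = Real.sqrt 2 := by
    rw [abs_1I]
  have habsI1I : ‖((1 + Complex.I) * Complex.I : ℂ)‖ = Real.sqrt 2 := by
    rw [norm_mul, habs1I, Complex.norm_I, mul_one]
  have t1 : ‖Δ - (Complex.exp ((1 + Complex.I) * Δ) - 1) / (1 + Complex.I)‖ ≤
      2 * ‖Δ‖^2 / Real.sqrt 2 := by
    have hid : Δ - (Complex.exp ((1 + Complex.I) * Δ) - 1) / (1 + Complex.I) =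
        ((1 + Complex.I) * Δ - (Complex.exp ((1 + Complex.I) * Δ) - 1)) / (1 + Complex.I) := by
      rw [eq_div_iff hI1_ne, sub_mul, div_mul_cancel₀ _ hI1_ne]; ring
    rw [hid, norm_div, habs1I, norm_sub_rev]
    gcongr
  have hs2pos : (0:ℝ) < Real.sqrt 2 := by positivity
  have hsq2 : ‖Δ‖^2 ≤ 0.2 * ‖Δ‖ := by
    rw [sq]
    exact mul_le_mul_of_nonneg_right hΔ02 hΔ0
  have t1' : ‖Δ - (Complex.exp ((1 + Complex.I) * Δ) - 1) / (1 + Complex.I)‖ ≤ 0.29 * ‖Δ‖ := by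
    refine t1.trans ?_
    rw [div_le_iff₀ hs2pos]
    have h2 : 0.29 * ‖Δ‖ * 1.414 ≤ 0.29 * ‖Δ‖ * Real.sqrt 2 :=
      mul_le_mul_of_nonneg_left hs2g.le (by positivity)
    linarith
  have t2' : ‖(Complex.exp ((1 + Complex.I) * w₂) - 1) *
      (Complex.exp ((1 + Complex.I) * Δ) - 1) / (1 + Complex.I)‖ ≤ 0.58 * ‖Δ‖ := by
    rw [norm_div, norm_mul, habs1I, div_le_iff₀ hs2pos]
    have hW1n : ‖Complex.exp ((1 + Complex.I) * w₂) - 1‖ ≤ 0.283 := by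
      have : Real.sqrt 2 * ‖w₂‖ ≤ 1.415 * 0.1 :=
        mul_le_mul hs2l.le hw01 (norm_nonneg _) (by norm_num)
      linarith
    have hD1n : ‖Complex.exp ((1 + Complex.I) * Δ) - 1‖ ≤ 2.83 * ‖Δ‖ := by
      have : Real.sqrt 2 * ‖Δ‖ ≤ 1.415 * ‖Δ‖ := mul_le_mul_of_nonneg_right hs2l.le hΔ0
      linarith
    have hp : ‖Complex.exp ((1 + Complex.I) * w₂) - 1‖ *
        ‖Complex.exp ((1 + Complex.I) * Δ) - 1‖ ≤ 0.283 * (2.83 * ‖Δ‖) :=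
      mul_le_mul hW1n hD1n (norm_nonneg _) (by norm_num)
    have h2 : 0.58 * ‖Δ‖ * 1.414 ≤ 0.58 * ‖Δ‖ * Real.sqrt 2 :=
      mul_le_mul_of_nonneg_left hs2g.le (by positivity)
    linarith
  have t3' : ‖(nuf ρ₁ - nuf ρ₂) / ((1 + Complex.I) * Complex.I)‖ ≤ 0.005 * ‖Δ‖ := by
    rw [norm_div, habsI1I, div_le_iff₀ hs2pos]
    have h2 : 0.005 * ‖Δ‖ * 1.414 ≤ 0.005 * ‖Δ‖ * Real.sqrt 2 :=
      mul_le_mul_of_nonneg_left hs2g.le (by positivity)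
    linarith
  rw [← hΔdef, ← hw2def] at key
  calc ‖Tmap (ctr n) ρ₁ - Tmap (ctr n) ρ₂‖
      = ‖(Δ - (Complex.exp ((1 + Complex.I) * Δ) - 1) / (1 + Complex.I))
        - (Complex.exp ((1 + Complex.I) * w₂) - 1) *
            (Complex.exp ((1 + Complex.I) * Δ) - 1) / (1 + Complex.I)
        + (nuf ρ₁ - nuf ρ₂) / ((1 + Complex.I) * Complex.I)‖ := by rw [key]
    _ ≤ ‖(Δ - (Complex.exp ((1 + Complex.I) * Δ) - 1) / (1 + Complex.I))
        - (Complex.exp ((1 + Complex.I) * w₂) - 1) *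
            (Complex.exp ((1 + Complex.I) * Δ) - 1) / (1 + Complex.I)‖
        + ‖(nuf ρ₁ - nuf ρ₂) / ((1 + Complex.I) * Complex.I)‖ := norm_add_le _ _
    _ ≤ (‖Δ - (Complex.exp ((1 + Complex.I) * Δ) - 1) / (1 + Complex.I)‖
        + ‖(Complex.exp ((1 + Complex.I) * w₂) - 1) *
            (Complex.exp ((1 + Complex.I) * Δ) - 1) / (1 + Complex.I)‖)
        + ‖(nuf ρ₁ - nuf ρ₂) / ((1 + Complex.I) * Complex.I)‖ := by
        gcongr
        exact norm_sub_le _ _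
    _ ≤ (0.29 * ‖Δ‖ + 0.58 * ‖Δ‖) + 0.005 * ‖Δ‖ := by
        gcongr
    _ ≤ 0.9 * ‖Δ‖ := by linarith

lemma fixed_iff (c ρ : ℂ) : Tmap c ρ = ρ ↔
    Complex.exp ((1 + Complex.I) * ρ) = Complex.I + nuf ρ := by
  have hd : ((1 + Complex.I) * Complex.I : ℂ) ≠ 0 := mul_ne_zero hI1_ne Complex.I_ne_zero
  rw [Tmap, sub_eq_self, div_eq_zero_iff]
  constructor
  · rintro (h | h)
    · rw [sub_sub, sub_eq_zero] at h; exact h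
    · exact absurd h hd
  · intro h
    left
    rw [sub_sub, sub_eq_zero]; exact h

lemma Tmap_into {n : ℕ} (hn : 1 ≤ n) {ρ : ℂ} (hρ : ρ ∈ Metric.closedBall (ctr n) 0.1) :
    ‖Tmap (ctr n) ρ - ctr n‖ ≤ 0.095 := by
  have hc : ctr (n:ℝ) ∈ Metric.closedBall (ctr n) 0.1 := Metric.mem_closedBall_self (by norm_num)
  have h1 : ‖Tmap (ctr n) ρ - Tmap (ctr n) (ctr n)‖ ≤ 0.9 * ‖ρ - ctr n‖ := Tmap_lip hn hρ hc
  have hρ' : ‖ρ - ctr (n:ℝ)‖ ≤ 0.1 := by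
    rw [← dist_eq_norm]; exact Metric.mem_closedBall.mp hρ
  have h2 : Tmap (ctr n) (ctr n) - ctr n = nuf (ctr n) / ((1 + Complex.I) * Complex.I) := by
    rw [Tmap, exp_ctr_nat]; ring
  have h3 : ‖Tmap (ctr n) (ctr n) - ctr n‖ ≤ 0.0015 := by
    rw [h2, norm_div]
    rw [show ‖((1 + Complex.I) * Complex.I : ℂ)‖ = Real.sqrt 2 by
      rw [norm_mul, abs_1I, Complex.norm_I, mul_one]]
    calc ‖nuf (ctr (n:ℝ))‖ / Real.sqrt 2 ≤ 0.002 / 1.414 :=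
          div_le_div₀ (by norm_num) (nuf_small hn hc) (by norm_num) sqrt2_gt.le
      _ ≤ 0.0015 := by norm_num
  calc ‖Tmap (ctr n) ρ - ctr n‖
      ≤ ‖Tmap (ctr n) ρ - Tmap (ctr n) (ctr n)‖ + ‖Tmap (ctr n) (ctr n) - ctr n‖ := by
        have := norm_add_le (Tmap (ctr n) ρ - Tmap (ctr n) (ctr n))
          (Tmap (ctr n) (ctr n) - ctr n)
        simpa using this
    _ ≤ 0.9 * 0.1 + 0.0015 := by
        refine add_le_add (h1.trans ?_) h3
        nlinarith [norm_nonneg (ρ - ctr (n:ℝ))]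
    _ ≤ 0.095 := by norm_num

lemma exists_fixed (n : ℕ) (hn : 1 ≤ n) :
    ∃ z ∈ Metric.closedBall (ctr n) 0.1, Tmap (ctr n) z = z ∧ ‖z - ctr n‖ ≤ 0.095 := by
  have hsc : IsComplete (Metric.closedBall (ctr (n:ℝ)) 0.1) :=
    Metric.isClosed_closedBall.isComplete
  have hsf : Set.MapsTo (Tmap (ctr n)) (Metric.closedBall (ctr (n:ℝ)) 0.1)
      (Metric.closedBall (ctr (n:ℝ)) 0.1) := by
    intro ρ hρ
    rw [Metric.mem_closedBall, dist_eq_norm]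
    linarith [Tmap_into hn hρ]
  have hlip : LipschitzOnWith (9/10 : NNReal) (Tmap (ctr n)) (Metric.closedBall (ctr (n:ℝ)) 0.1) := by
    apply LipschitzOnWith.of_dist_le_mul
    intro x hx y hy
    rw [dist_eq_norm, dist_eq_norm]
    have := Tmap_lip hn hx hy
    have hc : ((9/10 : NNReal) : ℝ) = 0.9 := by norm_num
    rw [hc]
    exact this
  have hcontr : ContractingWith (9/10) (hsf.restrict _ _ _) :=
    ⟨by rw [← NNReal.coe_lt_coe]; push_cast; norm_num, hlip.mapsToRestrict hsf⟩
  obtain ⟨z, hzs, hfix, -, -⟩ := hcontr.exists_fixedPoint' hsc hsf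
    (Metric.mem_closedBall_self (by norm_num)) (edist_ne_top _ _)
  refine ⟨z, hzs, hfix, ?_⟩
  have := Tmap_into hn hzs
  rwa [hfix] at this

lemma key_identity2 (z : ℂ) :
    2 * Complex.exp (Complex.I * z) * (Complex.cosh z - Complex.cos z) =
      Complex.exp ((1 + Complex.I) * z) + Complex.exp ((Complex.I - 1) * z)
        - Complex.exp (2 * Complex.I * z) - 1 := by
  have hA : Complex.exp z ≠ 0 := Complex.exp_ne_zero z
  have hB : Complex.exp (Complex.I * z) ≠ 0 := Complex.exp_ne_zero _
  have e1 : Complex.exp ((1 + Complex.I) * z) = Complex.exp z * Complex.exp (Complex.I * z) := by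
    rw [← Complex.exp_add]; ring_nf
  have e2 : Complex.exp ((Complex.I - 1) * z) = Complex.exp (Complex.I * z) * (Complex.exp z)⁻¹ := by
    rw [← Complex.exp_neg, ← Complex.exp_add]; ring_nf
  have e3 : Complex.exp (2 * Complex.I * z) = Complex.exp (Complex.I * z) * Complex.exp (Complex.I * z) := by
    rw [← Complex.exp_add]; ring_nf
  have e4 : Complex.exp (-z) = (Complex.exp z)⁻¹ := Complex.exp_neg z
  have e5 : Complex.exp (-z * Complex.I) = (Complex.exp (Complex.I * z))⁻¹ := by
    rw [show -z * Complex.I = -(Complex.I * z) by ring, Complex.exp_neg]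
  have e6 : Complex.exp (z * Complex.I) = Complex.exp (Complex.I * z) := by rw [mul_comm]
  rw [Complex.cosh, Complex.cos, e1, e2, e3, e4, e5, e6]
  field_simp
  ring

lemma deriv_ne {n : ℕ} (hn : 1 ≤ n) {z : ℂ} (hz : z ∈ Metric.closedBall (ctr n) 0.1)
    (h0 : Complex.sinh z - Complex.sin z = 0) :
    deriv (fun ρ => Complex.sinh ρ - Complex.sin ρ) z ≠ 0 := by
  have hd : deriv (fun ρ => Complex.sinh ρ - Complex.sin ρ) z = Complex.cosh z - Complex.cos z :=
    ((Complex.hasDerivAt_sinh z).sub (Complex.hasDerivAt_sin z)).deriv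
  rw [hd]
  intro hzero
  have key2 := key_identity2 z
  rw [hzero, mul_zero] at key2
  have hE := (zero_iff z).mp h0
  rw [hE] at key2
  -- 0 = I + nuf z + exp((I-1)z) - exp(2Iz) - 1
  have hIm1 : (Complex.I - 1 : ℂ) =
      -(nuf z + Complex.exp ((Complex.I - 1) * z) - Complex.exp (2 * Complex.I * z)) := by
    linear_combination -key2
  obtain ⟨hre, him⟩ := mem_bounds hn hz
  have hnu : ‖nuf z‖ ≤ 0.002 := nuf_small hn hz
  have hb1 : ‖Complex.exp ((Complex.I - 1) * z)‖ ≤ 0.001 := by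
    rw [Complex.norm_exp, re_Im1]
    have : Real.exp (-z.re - z.im) ≤ Real.exp (-(7.6:ℝ)) := Real.exp_le_exp.mpr (by linarith)
    linarith [exp76]
  have hb2 : ‖Complex.exp (2 * Complex.I * z)‖ ≤ 0.001 := by
    rw [Complex.norm_exp, re_2I]
    have : Real.exp (-2 * z.im) ≤ Real.exp (-(7.6:ℝ)) := Real.exp_le_exp.mpr (by linarith)
    linarith [exp76]
  have hsmall : ‖(Complex.I - 1 : ℂ)‖ ≤ 0.004 := by
    rw [hIm1, norm_neg]
    calc ‖nuf z + Complex.exp ((Complex.I - 1) * z) - Complex.exp (2 * Complex.I * z)‖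
        ≤ ‖nuf z + Complex.exp ((Complex.I - 1) * z)‖ + ‖Complex.exp (2 * Complex.I * z)‖ :=
          norm_sub_le _ _
      _ ≤ (‖nuf z‖ + ‖Complex.exp ((Complex.I - 1) * z)‖) + ‖Complex.exp (2 * Complex.I * z)‖ := by
          gcongr; exact norm_add_le _ _
      _ ≤ 0.004 := by linarith
  have hbig : ‖(Complex.I - 1 : ℂ)‖ = Real.sqrt 2 := by
    rw [abs_Im1]
  rw [hbig] at hsmall
  linarith [sqrt2_gt]

lemma ctr_mul (r : ℝ) : (1 + Complex.I) * ctr r =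
    ((2 * Real.pi * r + Real.pi / 2 : ℝ) : ℂ) * Complex.I := by
  rw [ctr_eq]
  push_cast
  ring_nf
  rw [Complex.I_sq]
  ring

lemma expI2 : Complex.exp (((Real.pi / 2 : ℝ) : ℂ) * Complex.I) = Complex.I := by
  rw [Complex.exp_mul_I, ← Complex.ofReal_cos, ← Complex.ofReal_sin,
    Real.cos_pi_div_two, Real.sin_pi_div_two]
  simp

lemma exp37 : Real.exp (-(3.76:ℝ)) ≤ 1/35 := by
  have h1 : Real.exp 3.76 = Real.exp 1 ^ 3 * Real.exp 0.76 := by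
    rw [← Real.exp_nat_mul, ← Real.exp_add]; norm_num
  have h2 : (2.7182818:ℝ) ≤ Real.exp 1 := by
    have := Real.exp_one_gt_d9; linarith
  have h3 : (1.76:ℝ) ≤ Real.exp 0.76 := by
    have := Real.add_one_le_exp (0.76:ℝ); linarith
  have h4 : (2.7182818:ℝ)^3 ≤ Real.exp 1 ^ 3 := by
    exact pow_le_pow_left₀ (by norm_num) h2 3
  have h5 : (35:ℝ) ≤ Real.exp 3.76 := by rw [h1]; nlinarith [Real.exp_pos (0.76:ℝ)]
  rw [Real.exp_neg, show (1/35:ℝ) = 35⁻¹ by norm_num]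
  exact inv_anti₀ (by norm_num) h5

lemma sector_bounds {ρ : ℂ} (h5 : 5 < ‖ρ‖) (h1 : Real.pi / 8 < ρ.arg)
    (h2 : ρ.arg < 3 * Real.pi / 8) : 1.88 ≤ ρ.re ∧ 1.88 ≤ ρ.im := by
  have hρ0 : ρ ≠ 0 := by
    intro h; rw [h] at h5; simp at h5; linarith
  have hπ : (3.141592:ℝ) < Real.pi := by
    have := Real.pi_gt_d6; linarith
  have hπ' : Real.pi < 3.15 := by
    have := Real.pi_lt_d2; linarith
  -- sin (π/8) ≥ 0.38
  have hs2 : Real.sqrt 2 < 1.415 := sqrt2_lt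
  have hsin8 : (0.38:ℝ) ≤ Real.sin (Real.pi / 8) := by
    rw [Real.sin_pi_div_eight]
    have h76 : (0.76:ℝ) ≤ Real.sqrt (2 - Real.sqrt 2) := by
      have hle : (0.585:ℝ) ≤ 2 - Real.sqrt 2 := by linarith
      have := Real.sqrt_le_sqrt hle
      have h0 : (0.76:ℝ) ≤ Real.sqrt 0.585 := by
        rw [show (0.76:ℝ) = Real.sqrt (0.76^2) by rw [Real.sqrt_sq]; norm_num]
        exact Real.sqrt_le_sqrt (by norm_num)
      linarith
    linarith
  -- cos (arg ρ) > sin (π/8)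
  have harg_mem : ρ.arg ∈ Set.Icc (0:ℝ) Real.pi := by
    constructor
    · linarith [Real.pi_pos]
    · linarith [Complex.arg_le_pi ρ]
  have h38mem : (3 * Real.pi / 8 : ℝ) ∈ Set.Icc (0:ℝ) Real.pi := by
    constructor <;> nlinarith [Real.pi_pos]
  have hcos : Real.cos (3 * Real.pi / 8) < Real.cos ρ.arg := by
    exact Real.strictAntiOn_cos harg_mem h38mem h2
  have hcos38 : Real.cos (3 * Real.pi / 8) = Real.sin (Real.pi / 8) := by
    rw [show (3 * Real.pi / 8 : ℝ) = Real.pi / 2 - Real.pi / 8 by ring,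
      Real.cos_pi_div_two_sub]
  -- sin (arg ρ) > sin (π/8)
  have hsin : Real.sin (Real.pi / 8) < Real.sin ρ.arg := by
    apply Real.strictMonoOn_sin ⟨by linarith, by linarith⟩ ⟨by linarith, by linarith⟩ h1
  have hre : ρ.re = ‖ρ‖ * Real.cos ρ.arg := by
    rw [Complex.cos_arg hρ0]; field_simp
  have him : ρ.im = ‖ρ‖ * Real.sin ρ.arg := by
    rw [Complex.sin_arg]; field_simp
  rw [hcos38] at hcos
  constructor
  · rw [hre]; nlinarith
  · rw [him]; nlinarith

lemma part2 {ρ : ℂ} (h5 : 5 < ‖ρ‖) (h1 : Real.pi / 8 < ρ.arg)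
    (h2 : ρ.arg < 3 * Real.pi / 8) (h0 : Complex.sinh ρ - Complex.sin ρ = 0) :
    ∃ n : ℕ, 1 ≤ n ∧ ρ ∈ Metric.ball (ctr n) 0.1 := by
  obtain ⟨hre, him⟩ := sector_bounds h5 h1 h2
  have hE := (zero_iff ρ).mp h0
  have hν : ‖nuf ρ‖ ≤ 2/35 := by
    have h := nuf_bound (m := 1.88) hre him
    have : Real.exp (-(2 * (1.88:ℝ))) ≤ 1/35 := by
      rw [show -(2*(1.88:ℝ)) = -(3.76:ℝ) by norm_num]; exact exp37
    linarith
  set η : ℂ := -Complex.I * nuf ρ with hηdef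
  have hηn : ‖η‖ ≤ 2/35 := by
    rw [hηdef, norm_mul, norm_neg, Complex.norm_I, one_mul]; exact hν
  have hη1 : Complex.I + nuf ρ = Complex.I * (1 + η) := by
    rw [hηdef]; linear_combination (nuf ρ) * Complex.I_sq
  have h1η : (1 : ℂ) + η ≠ 0 := by
    intro h
    have h' : η = -1 := by linear_combination h
    rw [h'] at hηn
    simp at hηn
    norm_num at hηn
  have hexplog : Complex.exp ((1 + Complex.I) * ρ) =
      Complex.exp (((Real.pi / 2 : ℝ) : ℂ) * Complex.I + Complex.log (1 + η)) := by
    rw [Complex.exp_add, expI2, Complex.exp_log h1η, hE, hη1]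
  obtain ⟨k, hk⟩ := Complex.exp_eq_exp_iff_exists_int.mp hexplog
  have hctr : (1 + Complex.I) * (ρ - ctr k) = Complex.log (1 + η) := by
    rw [mul_sub, ctr_mul, hk]; push_cast; ring
  have hlog : ‖Complex.log (1 + η)‖ ≤ 3/35 := by
    have := Complex.norm_log_one_add_half_le_self (z := η) (by
      rw [show (1/2 : ℝ) = 0.5 by norm_num]; linarith)
    linarith
  have hdist : ‖ρ - ctr k‖ ≤ 0.07 := by
    have hq : ρ - ctr k = Complex.log (1 + η) / (1 + Complex.I) := by
      rw [eq_div_iff hI1_ne]; linear_combination hctr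
    rw [hq, norm_div]
    rw [show ‖(1 + Complex.I : ℂ)‖ = Real.sqrt 2 by rw [abs_1I]]
    calc ‖Complex.log (1 + η)‖ / Real.sqrt 2 ≤ (3/35) / 1.414 :=
        div_le_div₀ (by norm_num) hlog (by norm_num) sqrt2_gt.le
      _ ≤ 0.07 := by norm_num
  have hπ : (3.141592:ℝ) < Real.pi := by have := Real.pi_gt_d6; linarith
  have hπ' : Real.pi < 3.15 := by have := Real.pi_lt_d2; linarith
  have hrek : |ρ.re - (Real.pi * k + Real.pi / 4)| ≤ 0.07 := by
    have h := Complex.abs_re_le_norm (ρ - ctr k)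
    rw [Complex.sub_re, ctr_re] at h
    exact h.trans hdist
  have hk1 : (1:ℤ) ≤ k := by
    rcases le_or_gt 1 k with h | h
    · exact h
    · exfalso
      have hk0 : (k:ℝ) ≤ 0 := by exact_mod_cast (by omega : k ≤ (0:ℤ))
      have := abs_le.mp hrek
      nlinarith
  refine ⟨k.toNat, by omega, ?_⟩
  have hcast : ((k.toNat : ℕ) : ℝ) = (k : ℝ) := by exact_mod_cast Int.toNat_of_nonneg (by omega)
  rw [Metric.mem_ball, Complex.dist_eq, show ((k.toNat : ℕ) : ℝ) = (k:ℝ) from hcast]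
  linarith

/-- For each `n ≥ 1`, the function `f(ρ) = sinh ρ − sin ρ` has exactly one
zero, and this zero is simple, in the open disk of radius `0.1` centered at
`ρₙ⋄ = exp(iπ/4)·(√2·πn + π/(2√2))`; moreover every zero of `f` with `|ρ| > 5` and
`π/8 < arg ρ < 3π/8` lies in one of these disks. -/
theorem sinh_sub_sin_zeros :
    (∀ n : ℕ, 1 ≤ n →
      ∃ z ∈ Metric.ball (Complex.exp (Complex.I * Real.pi / 4) *
          ((Real.sqrt 2 * Real.pi * (n : ℝ) + Real.pi / (2 * Real.sqrt 2) : ℝ) : ℂ)) (0.1 : ℝ),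
        Complex.sinh z - Complex.sin z = 0 ∧
        deriv (fun ρ => Complex.sinh ρ - Complex.sin ρ) z ≠ 0 ∧
        ∀ w ∈ Metric.ball (Complex.exp (Complex.I * Real.pi / 4) *
            ((Real.sqrt 2 * Real.pi * (n : ℝ) + Real.pi / (2 * Real.sqrt 2) : ℝ) : ℂ)) (0.1 : ℝ),
          Complex.sinh w - Complex.sin w = 0 → w = z) ∧
    (∀ ρ : ℂ, 5 < ‖ρ‖ → Real.pi / 8 < ρ.arg → ρ.arg < 3 * Real.pi / 8 →
      Complex.sinh ρ - Complex.sin ρ = 0 →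
      ∃ n : ℕ, 1 ≤ n ∧ ρ ∈ Metric.ball (Complex.exp (Complex.I * Real.pi / 4) *
        ((Real.sqrt 2 * Real.pi * (n : ℝ) + Real.pi / (2 * Real.sqrt 2) : ℝ) : ℂ)) (0.1 : ℝ)) := by
  constructor
  · intro n hn
    obtain ⟨z, hzcb, hzfix, hznear⟩ := exists_fixed n hn
    have hzball : z ∈ Metric.ball (ctr n) 0.1 := by
      rw [Metric.mem_ball, dist_eq_norm]; linarith
    have hz0 : Complex.sinh z - Complex.sin z = 0 :=
      (zero_iff z).mpr ((fixed_iff (ctr n) z).mp hzfix)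
    refine ⟨z, hzball, hz0, deriv_ne hn hzcb hz0, ?_⟩
    intro w hwball hw0
    have hwcb : w ∈ Metric.closedBall (ctr (n:ℝ)) 0.1 := Metric.ball_subset_closedBall hwball
    have hwfix : Tmap (ctr n) w = w := (fixed_iff (ctr n) w).mpr ((zero_iff w).mp hw0)
    have hlip := Tmap_lip hn hwcb hzcb
    rw [hwfix, hzfix] at hlip
    have h0 : ‖w - z‖ ≤ 0 := by linarith
    have := norm_nonneg (w - z)
    have : ‖w - z‖ = 0 := le_antisymm h0 this
    exact sub_eq_zero.mp (norm_eq_zero.mp this)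
  · intro ρ h5 h1 h2 h0
    exact part2 h5 h1 h2 h0
end

section
/- Fix θ, σ, t₀, t₁ ∈ ℂ and define, for ρ ∈ ℂ∖{0}, r₁(ρ) = −4i + iθ/ρ + 2iσ/ρ² − i(t₀+t₁)/(2ρ²) − iθ²/(8ρ²) and r₂(ρ) = 4 − iθ/ρ + 2σ/ρ² − (t₀+t₁)/(2ρ²) − θ²/(8ρ²). Then, as |ρ| → ∞, r₂(ρ)/r₁(ρ) − ( i + (1+i)θ/(4ρ) + iσ/ρ² − i(t₀+t₁)/(4ρ²) + θ²/(16ρ²) ) = O(ρ⁻³). -/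
set_option maxHeartbeats 1000000

open Complex Filter Asymptotics

/-- With `r₁(ρ) = −4i + iθ/ρ + 2iσ/ρ² − i(t₀+t₁)/(2ρ²) − iθ²/(8ρ²)` and
`r₂(ρ) = 4 − iθ/ρ + 2σ/ρ² − (t₀+t₁)/(2ρ²) − θ²/(8ρ²)`, as `|ρ| → ∞`,
`r₂/r₁ − (i + (1+i)θ/(4ρ) + iσ/ρ² − i(t₀+t₁)/(4ρ²) + θ²/(16ρ²)) = O(ρ⁻³)`. -/
theorem ratio_r2_r1_asymptotics (θ σ t₀ t₁ : ℂ) :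
    (fun ρ : ℂ =>
        (4 - Complex.I * θ / ρ + 2 * σ / ρ ^ 2 - (t₀ + t₁) / (2 * ρ ^ 2) - θ ^ 2 / (8 * ρ ^ 2)) /
          (-4 * Complex.I + Complex.I * θ / ρ + 2 * Complex.I * σ / ρ ^ 2
            - Complex.I * (t₀ + t₁) / (2 * ρ ^ 2) - Complex.I * θ ^ 2 / (8 * ρ ^ 2)) -
        (Complex.I + (1 + Complex.I) * θ / (4 * ρ) + Complex.I * σ / ρ ^ 2
          - Complex.I * (t₀ + t₁) / (4 * ρ ^ 2) + θ ^ 2 / (16 * ρ ^ 2))) =O[Filter.comap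
            (fun z : ℂ => ‖z‖) Filter.atTop] fun ρ : ℂ => (ρ ^ 3)⁻¹ := by
  have h2 : (Complex.I) ^ 2 = -1 := Complex.I_sq
  have h3 : (Complex.I) ^ 3 = -Complex.I := by rw [pow_succ, h2]; ring
  have h4 : (Complex.I) ^ 4 = 1 := by rw [pow_succ, h3]; simp [Complex.I_mul_I]
  set l : Filter ℂ := Filter.comap (fun z : ℂ => ‖z‖) Filter.atTop with hl
  set b : ℂ := θ * (2 * σ - (t₀ + t₁) / 2 - θ ^ 2 / 8) * (3 - Complex.I) / 4
      + θ ^ 3 * (1 - Complex.I) / 16 with hb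
  set a : ℂ := -Complex.I * (Complex.I * σ - Complex.I * (t₀ + t₁) / 4 + θ ^ 2 / 16)
      * (2 * σ - (t₀ + t₁) / 2 - θ ^ 2 / 8) with ha
  have hlc : l = Bornology.cobounded ℂ := by
    rw [hl, ← comap_norm_atTop]
  have hinv : Tendsto (fun ρ : ℂ => ρ⁻¹) l (nhds 0) := by
    rw [hlc]
    exact tendsto_inv₀_cobounded
  set r₁ : ℂ → ℂ := fun ρ =>
      -4 * Complex.I + Complex.I * θ / ρ + 2 * Complex.I * σ / ρ ^ 2
        - Complex.I * (t₀ + t₁) / (2 * ρ ^ 2) - Complex.I * θ ^ 2 / (8 * ρ ^ 2) with hr₁def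
  have hne : ∀ᶠ ρ : ℂ in l, ρ ≠ 0 := by
    have habs : Tendsto (fun z : ℂ => ‖z‖) l Filter.atTop := tendsto_comap
    filter_upwards [habs.eventually (Filter.eventually_ge_atTop 1)] with ρ hρ
    intro h0; simp [h0] at hρ; linarith
  have hr₁ : Tendsto r₁ l (nhds (-4 * Complex.I)) := by
    have h : Tendsto (fun w : ℂ =>
        -4 * Complex.I + Complex.I * θ * w + 2 * Complex.I * σ * w ^ 2
          - Complex.I * (t₀ + t₁) / 2 * w ^ 2 - Complex.I * θ ^ 2 / 8 * w ^ 2) (nhds 0)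
        (nhds (-4 * Complex.I)) := by
      have := (Continuous.tendsto (by continuity :
        Continuous (fun w : ℂ =>
          -4 * Complex.I + Complex.I * θ * w + 2 * Complex.I * σ * w ^ 2
            - Complex.I * (t₀ + t₁) / 2 * w ^ 2 - Complex.I * θ ^ 2 / 8 * w ^ 2)) 0)
      simpa using this
    have h2' := h.comp hinv
    refine h2'.congr' ?_
    filter_upwards [hne] with ρ hρ
    simp only [Function.comp, hr₁def]
    field_simp
    try ring
  have hr₁ne : ∀ᶠ ρ : ℂ in l, r₁ ρ ≠ 0 := by
    refine hr₁.eventually_ne ?_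
    simp [Complex.ext_iff]
  -- the bounded factor
  set g : ℂ → ℂ := fun ρ => (b + a * ρ⁻¹) / r₁ ρ with hg
  have hgten : Tendsto g l (nhds (b / (-4 * Complex.I))) := by
    have hnum : Tendsto (fun ρ : ℂ => b + a * ρ⁻¹) l (nhds b) := by
      have h1 : Tendsto (fun _ : ℂ => b) l (nhds b) := tendsto_const_nhds
      have h2'' : Tendsto (fun _ : ℂ => a) l (nhds a) := tendsto_const_nhds
      have := h1.add (h2''.mul hinv)
      simpa using this
    exact hnum.div hr₁ (by simp [Complex.ext_iff])
  have hgO : g =O[l] (fun _ : ℂ => (1 : ℂ)) := hgten.isBigO_one ℂ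
  have hO : (fun ρ : ℂ => g ρ * (ρ ^ 3)⁻¹) =O[l] fun ρ : ℂ => (ρ ^ 3)⁻¹ := by
    simpa using hgO.mul (isBigO_refl (fun ρ : ℂ => (ρ ^ 3)⁻¹) l)
  refine Filter.EventuallyEq.trans_isBigO ?_ hO
  filter_upwards [hne, hr₁ne] with ρ hρ hr
  simp only [hr₁def] at hr
  obtain ⟨Q₁, hQ₁⟩ : ∃ q : ℂ, q = -4 * Complex.I * ρ ^ 2 + Complex.I * θ * ρ
      + 2 * Complex.I * σ - Complex.I * (t₀ + t₁) / 2 - Complex.I * θ ^ 2 / 8 := ⟨_, rfl⟩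
  obtain ⟨Q₂, hQ₂⟩ : ∃ q : ℂ, q = 4 * ρ ^ 2 - Complex.I * θ * ρ + 2 * σ
      - (t₀ + t₁) / 2 - θ ^ 2 / 8 := ⟨_, rfl⟩
  obtain ⟨QA, hQA⟩ : ∃ q : ℂ, q = Complex.I * ρ ^ 2 + (1 + Complex.I) * θ * ρ / 4
      + Complex.I * σ - Complex.I * (t₀ + t₁) / 4 + θ ^ 2 / 16 := ⟨_, rfl⟩
  have e₁ : -4 * Complex.I + Complex.I * θ / ρ + 2 * Complex.I * σ / ρ ^ 2
      - Complex.I * (t₀ + t₁) / (2 * ρ ^ 2) - Complex.I * θ ^ 2 / (8 * ρ ^ 2)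
      = Q₁ / ρ ^ 2 := by
    rw [hQ₁, eq_div_iff (pow_ne_zero 2 hρ)]
    field_simp [hρ]
  have e₂ : 4 - Complex.I * θ / ρ + 2 * σ / ρ ^ 2 - (t₀ + t₁) / (2 * ρ ^ 2)
      - θ ^ 2 / (8 * ρ ^ 2) = Q₂ / ρ ^ 2 := by
    rw [hQ₂, eq_div_iff (pow_ne_zero 2 hρ)]
    field_simp [hρ]
  have eA : Complex.I + (1 + Complex.I) * θ / (4 * ρ) + Complex.I * σ / ρ ^ 2
      - Complex.I * (t₀ + t₁) / (4 * ρ ^ 2) + θ ^ 2 / (16 * ρ ^ 2) = QA / ρ ^ 2 := by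
    have hc7 : ρ ^ 7 * ρ⁻¹ ^ 7 = 1 := by
      rw [← mul_pow, mul_inv_cancel₀ hρ, one_pow]
    rw [hQA, eq_div_iff (pow_ne_zero 2 hρ)]
    field_simp [hρ]
  have hQ₁ne : Q₁ ≠ 0 := by
    intro h0
    apply hr
    rw [e₁, h0, zero_div]
  have key : ρ ^ 2 * Q₂ - QA * Q₁ = b * ρ + a := by
    rw [hQ₁, hQ₂, hQA, hb, ha]
    ring_nf
    simp only [h2, h3, h4]
    ring
  simp only [hg, hr₁def]
  rw [e₁, e₂, eA]
  field_simp
  linear_combination key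
end
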